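/- arXiv:2205.06028 — 7 statements merged into one kernel-verified Lean document; each statement's English description precedes it below -/
import Mathlib

section
/- Let ω : (0,1] → ℝ₊ and μ > 0 be such that t ↦ ω(t)/t^μ is almost increasing with constant C₁ (i.e. ω(t)/t^μ ≤ C₁ ω(s)/s^μ for t ≤ s). Suppose g : ℝ₊ → ℝ₊ satisfies ∫_{1/t}^{2/t} g(λ) dλ ≤ C ω(t)² for all t ∈ (0,1). Then there is a constant C₃ such that ∫_{1/t}^{∞} g(λ) dλ ≤ C₃ ω(t)² for all t ∈ (0,1). -/
open Set MeasureTheory ENNReal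

lemma cover_aux (a : ℝ) (ha : 0 < a) :
    Ioi a ⊆ ⋃ i : ℕ, Ioc (2 ^ i * a) (2 ^ (i + 1) * a) := by
  intro x hx
  have hx' : a < x := hx
  have hP : ∃ n : ℕ, x ≤ 2 ^ n * a := by
    obtain ⟨n, hn⟩ := pow_unbounded_of_one_lt (x / a) (one_lt_two (α := ℝ))
    exact ⟨n, le_of_lt ((div_lt_iff₀ ha).1 hn |>.trans_le (by rw [mul_comm]))⟩
  classical
  set n := Nat.find hP with hn
  have hn1 : x ≤ 2 ^ n * a := Nat.find_spec hP
  have hn0 : n ≠ 0 := by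
    intro h
    rw [h] at hn1
    simp at hn1
    linarith
  obtain ⟨m, hm⟩ : ∃ m, n = m + 1 := ⟨n - 1, (Nat.succ_pred_eq_of_pos (Nat.pos_of_ne_zero hn0)).symm⟩
  have hlt : ¬ x ≤ 2 ^ m * a := Nat.find_min hP (by omega)
  refine mem_iUnion.2 ⟨m, ?_, ?_⟩
  · linarith [not_le.1 hlt]
  · rw [hm] at hn1; exact hn1

/-- dyadic summation lemma. If ω(t)/t^μ is almost increasing
and ∫_{1/t}^{2/t} g ≤ C ω(t)² for t ∈ (0,1), then ∫_{1/t}^∞ g ≤ C₃ ω(t)². -/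
theorem dyadic_tail_bound
    (ω : ℝ → ℝ) (μ : ℝ) (hμ : 0 < μ)
    (hωnonneg : ∀ t ∈ Ioc (0:ℝ) 1, 0 ≤ ω t)
    (C₁ : ℝ) (hC₁ : 1 ≤ C₁)
    (hai : ∀ t ∈ Ioc (0:ℝ) 1, ∀ s ∈ Ioc (0:ℝ) 1,
      t ≤ s → ω t / t ^ μ ≤ C₁ * (ω s / s ^ μ))
    (g : ℝ → ℝ≥0∞) (hg : Measurable g)
    (C : ℝ) (hC : 0 < C)
    (hdyadic : ∀ t ∈ Ioo (0:ℝ) 1,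
      ∫⁻ l in Ioc (1/t) (2/t), g l ≤ ENNReal.ofReal (C * ω t ^ 2)) :
    ∃ C₃ : ℝ, 0 < C₃ ∧ ∀ t ∈ Ioo (0:ℝ) 1,
      ∫⁻ l in Ioi (1/t), g l ≤ ENNReal.ofReal (C₃ * ω t ^ 2) := by
  set r : ℝ := (2:ℝ) ^ (-μ) with hr
  have hr0 : 0 < r := Real.rpow_pos_of_pos two_pos _
  have hr1 : r < 1 := by
    rw [hr]
    exact Real.rpow_lt_one_of_one_lt_of_neg one_lt_two (by linarith)
  set q : ℝ := r ^ 2 with hq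
  have hq0 : 0 < q := by positivity
  have hq1 : q < 1 := by nlinarith
  refine ⟨C * C₁ ^ 2 * (1 - q)⁻¹, mul_pos (mul_pos hC (by positivity)) (inv_pos.2 (by linarith)), ?_⟩
  intro t ht
  obtain ⟨ht0, ht1⟩ := ht
  have hωt : 0 ≤ ω t := hωnonneg t ⟨ht0, ht1.le⟩
  have hinv : 0 < 1 / t := by positivity
  -- per-interval bound
  have key : ∀ i : ℕ, ∫⁻ l in Ioc (2 ^ i * (1/t)) (2 ^ (i+1) * (1/t)), g l
      ≤ ENNReal.ofReal (C * C₁ ^ 2 * ω t ^ 2 * q ^ i) := by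
    intro i
    set s : ℝ := t / 2 ^ i with hs
    have h2i : (1:ℝ) ≤ 2 ^ i := one_le_pow₀ one_le_two
    have hs0 : 0 < s := by positivity
    have hst : s ≤ t := by
      rw [hs, div_le_iff₀ (pow_pos two_pos i)]
      nlinarith
    have hs1 : s < 1 := lt_of_le_of_lt hst ht1
    have e1 : 1 / s = 2 ^ i * (1 / t) := by field_simp [hs]; rw [hs]; field_simp
    have e2 : 2 / s = 2 ^ (i+1) * (1 / t) := by
      rw [hs]; field_simp; rw [pow_succ]; ring
    have hωs : ω s ≤ C₁ * r ^ i * ω t := by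
      have h := hai s ⟨hs0, hs1.le⟩ t ⟨ht0, ht1.le⟩ hst
      have hsμ : (0:ℝ) < s ^ μ := Real.rpow_pos_of_pos hs0 _
      have htμ : (0:ℝ) < t ^ μ := Real.rpow_pos_of_pos ht0 _
      have h2 : ω s ≤ C₁ * ω t * (s ^ μ / t ^ μ) := by
        rw [div_le_iff₀ hsμ] at h
        calc ω s ≤ C₁ * (ω t / t ^ μ) * s ^ μ := h
          _ = C₁ * ω t * (s ^ μ / t ^ μ) := by ring
      have e3 : r ^ i = ((2:ℝ) ^ i) ^ (-μ) := by
        rw [hr, ← Real.rpow_natCast ((2:ℝ) ^ (-μ)) i, ← Real.rpow_natCast (2:ℝ) i,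
          ← Real.rpow_mul two_pos.le, ← Real.rpow_mul two_pos.le]
        ring_nf
      have hratio : s ^ μ / t ^ μ = r ^ i := by
        calc s ^ μ / t ^ μ = (s / t) ^ μ := (Real.div_rpow hs0.le ht0.le μ).symm
          _ = (((2:ℝ) ^ i)⁻¹) ^ μ := by
              congr 1
              rw [hs]; field_simp; try ring
          _ = ((2:ℝ) ^ i) ^ (-μ) := by
              rw [Real.inv_rpow (by positivity), ← Real.rpow_neg (by positivity)]
          _ = r ^ i := e3.symm
      calc ω s ≤ C₁ * ω t * (s ^ μ / t ^ μ) := h2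
        _ = C₁ * r ^ i * ω t := by rw [hratio]; ring
    have hωs0 : 0 ≤ ω s := hωnonneg s ⟨hs0, hs1.le⟩
    have hbd := hdyadic s ⟨hs0, hs1⟩
    rw [e1, e2] at hbd
    refine hbd.trans (ENNReal.ofReal_le_ofReal ?_)
    have : ω s ^ 2 ≤ (C₁ * r ^ i * ω t) ^ 2 := by nlinarith
    calc C * ω s ^ 2 ≤ C * (C₁ * r ^ i * ω t) ^ 2 := by nlinarith
      _ = C * C₁ ^ 2 * ω t ^ 2 * q ^ i := by rw [hq]; ring
  calc ∫⁻ l in Ioi (1/t), g l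
      ≤ ∫⁻ l in ⋃ i : ℕ, Ioc (2 ^ i * (1/t)) (2 ^ (i+1) * (1/t)), g l :=
        lintegral_mono_set (cover_aux _ hinv)
    _ ≤ ∑' i : ℕ, ∫⁻ l in Ioc (2 ^ i * (1/t)) (2 ^ (i+1) * (1/t)), g l :=
        lintegral_iUnion_le _ _
    _ ≤ ∑' i : ℕ, ENNReal.ofReal (C * C₁ ^ 2 * ω t ^ 2 * q ^ i) :=
        ENNReal.tsum_le_tsum key
    _ = ENNReal.ofReal (C * C₁ ^ 2 * ω t ^ 2) * ∑' i : ℕ, (ENNReal.ofReal q) ^ i := by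
        rw [← ENNReal.tsum_mul_left]
        exact tsum_congr fun i => by
          rw [ENNReal.ofReal_mul (by positivity), ENNReal.ofReal_pow hq0.le]
    _ = ENNReal.ofReal (C * C₁ ^ 2 * ω t ^ 2) * (1 - ENNReal.ofReal q)⁻¹ := by
        rw [ENNReal.tsum_geometric]
    _ ≤ ENNReal.ofReal (C * C₁ ^ 2 * (1 - q)⁻¹ * ω t ^ 2) := by
        rw [← ENNReal.ofReal_one, ← ENNReal.ofReal_sub _ hq0.le,
          ← ENNReal.ofReal_inv_of_pos (by linarith),
          ← ENNReal.ofReal_mul (by positivity)]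
        exact ENNReal.ofReal_le_ofReal (le_of_eq (by ring))
end

section
/- Let α > 0 and let F : ℝ → [0,∞) be measurable with ∫_0^1 (F(t)/t^α)² dt/t < ∞ and F bounded on (0,1) (e.g. F(t) ≤ M). If additionally the tail condition holds that for each t ∈ (0,1), ∫_{1/(2s)}^{1/s} h(λ) dλ ≤ C F(s)² for all s ∈ (0,1) for a nonnegative measurable h with ∫_0^∞ h < ∞, then ∫_0^∞ ( ∫_t^{2t} h(λ) λ^{2α} dλ ) dt/t < ∞. -/
open Set MeasureTheory ENNReal

/-- Besov-type decay of the Fourier transform. If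
∫_0^1 (F(t)/t^α)² dt/t < ∞, F is bounded on (0,1), h is a nonnegative
integrable density whose tails satisfy ∫_{1/(2s)}^{1/s} h ≤ C F(s)², then
∫_0^∞ (∫_t^{2t} h(λ) λ^{2α} dλ) dt/t < ∞. -/
theorem besov_decay
    (α : ℝ) (hα : 0 < α)
    (F : ℝ → ℝ) (hF : Measurable F) (hFnonneg : ∀ t, 0 ≤ F t)
    (hbesov : ∫⁻ t in Ioo (0:ℝ) 1,
      ENNReal.ofReal ((F t / t ^ α) ^ 2 * (1 / t)) < ⊤)
    (M : ℝ) (hFbdd : ∀ t ∈ Ioo (0:ℝ) 1, F t ≤ M)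
    (h : ℝ → ℝ≥0∞) (hh : Measurable h)
    (hint : ∫⁻ l in Ioi (0:ℝ), h l < ⊤)
    (C : ℝ) (hC : 0 < C)
    (htail : ∀ s ∈ Ioo (0:ℝ) 1,
      ∫⁻ l in Ioc (1/(2*s)) (1/s), h l ≤ ENNReal.ofReal (C * F s ^ 2)) :
    ∫⁻ t in Ioi (0:ℝ),
      (∫⁻ l in Ioc t (2*t), h l * ENNReal.ofReal (l ^ (2*α)))
        * ENNReal.ofReal (1 / t) < ⊤ := by
  have h2α : (0:ℝ) < 2*α := by linarith
  set G : ℝ → ℝ≥0∞ := fun t =>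
      (∫⁻ l in Ioc t (2*t), h l * ENNReal.ofReal (l ^ (2*α))) * ENNReal.ofReal (1 / t)
      with hGdef
  have hsplit : Ioi (0:ℝ) = Ioc (0:ℝ) (1/2) ∪ Ioi (1/2 : ℝ) :=
    (Ioc_union_Ioi_eq_Ioi (by norm_num)).symm
  have hdisj : Disjoint (Ioc (0:ℝ) (1/2)) (Ioi (1/2:ℝ)) :=
    (Iic_disjoint_Ioi le_rfl).mono_left Ioc_subset_Iic_self
  rw [hsplit, lintegral_union measurableSet_Ioi hdisj]
  -- Part 1 : small times
  have key1 : ∫⁻ t in Ioc (0:ℝ) (1/2), G t < ⊤ := by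
    set I := ∫⁻ l in Ioi (0:ℝ), h l with hIdef
    have hbound : ∀ t ∈ Ioc (0:ℝ) (1/2), G t ≤
        (ENNReal.ofReal ((2:ℝ) ^ (2*α)) * I) * ENNReal.ofReal (t ^ (2*α - 1)) := by
      rintro t ⟨ht0, ht2⟩
      have h2t : (0:ℝ) < 2*t := by linarith
      have hinner : (∫⁻ l in Ioc t (2*t), h l * ENNReal.ofReal (l ^ (2*α)))
          ≤ ENNReal.ofReal ((2*t) ^ (2*α)) * I := by
        calc ∫⁻ l in Ioc t (2*t), h l * ENNReal.ofReal (l ^ (2*α))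
            ≤ ∫⁻ l in Ioc t (2*t), ENNReal.ofReal ((2*t) ^ (2*α)) * h l := by
              refine setLIntegral_mono (hh.const_mul _) ?_
              intro l hl
              rw [mul_comm]
              exact mul_le_mul_left (ENNReal.ofReal_le_ofReal
                (Real.rpow_le_rpow (le_of_lt (lt_trans ht0 hl.1)) hl.2 h2α.le)) _
          _ = ENNReal.ofReal ((2*t) ^ (2*α)) * ∫⁻ l in Ioc t (2*t), h l :=
              lintegral_const_mul _ hh
          _ ≤ ENNReal.ofReal ((2*t) ^ (2*α)) * I := by
              gcongr
              exact lintegral_mono_set (fun l hl => lt_trans ht0 hl.1)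
      have hre : (2*t) ^ (2*α) * (1/t) = 2 ^ (2*α) * t ^ (2*α - 1) := by
        rw [Real.mul_rpow (by norm_num) ht0.le,
          show (2*α - 1) = 2*α + (-1) by ring, Real.rpow_add ht0, Real.rpow_neg_one]
        ring
      calc G t ≤ (ENNReal.ofReal ((2*t) ^ (2*α)) * I) * ENNReal.ofReal (1/t) :=
            mul_le_mul_left hinner _
        _ = (ENNReal.ofReal ((2:ℝ) ^ (2*α)) * I) * ENNReal.ofReal (t ^ (2*α - 1)) := by
            rw [mul_right_comm, ← ENNReal.ofReal_mul (Real.rpow_nonneg h2t.le _), hre,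
              ENNReal.ofReal_mul (Real.rpow_nonneg (by norm_num) _)]
            ring
    have hIne : ENNReal.ofReal ((2:ℝ) ^ (2*α)) * I ≠ ⊤ :=
      ENNReal.mul_ne_top ENNReal.ofReal_ne_top hint.ne
    have hfin : ∫⁻ t in Ioc (0:ℝ) (1/2), ENNReal.ofReal (t ^ (2*α - 1)) < ⊤ := by
      have hInt : IntegrableOn (fun t : ℝ => t ^ (2*α - 1)) (Ioc (0:ℝ) (1/2)) := by
        have := intervalIntegral.intervalIntegrable_rpow'
          (a := (0:ℝ)) (b := 1/2) (r := 2*α - 1) (by linarith)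
        rwa [intervalIntegrable_iff_integrableOn_Ioc_of_le (by norm_num)] at this
      exact hInt.lintegral_lt_top
    calc ∫⁻ t in Ioc (0:ℝ) (1/2), G t
        ≤ ∫⁻ t in Ioc (0:ℝ) (1/2),
            (ENNReal.ofReal ((2:ℝ) ^ (2*α)) * I) * ENNReal.ofReal (t ^ (2*α - 1)) := by
          exact setLIntegral_mono' measurableSet_Ioc hbound
      _ = (ENNReal.ofReal ((2:ℝ) ^ (2*α)) * I)
            * ∫⁻ t in Ioc (0:ℝ) (1/2), ENNReal.ofReal (t ^ (2*α - 1)) :=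
          lintegral_const_mul' _ _ hIne
      _ < ⊤ := ENNReal.mul_lt_top hIne.lt_top hfin
  -- Part 2 : large times, via change of variables s = 1/(2t)
  have key2 : ∫⁻ t in Ioi (1/2:ℝ), G t < ⊤ := by
    set g : ℝ → ℝ≥0∞ := fun x => ENNReal.ofReal ((F x / x ^ α) ^ 2 * (1 / x)) with hgdef
    set φ : ℝ → ℝ := fun t => 1/(2*t) with hφdef
    set φ' : ℝ → ℝ := fun t => -1/(2*t^2) with hφ'def
    have himg : φ '' Ioi (1/2:ℝ) = Ioo (0:ℝ) 1 := by
      ext x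
      constructor
      · rintro ⟨t, ht, rfl⟩
        simp only [mem_Ioi] at ht
        refine ⟨div_pos one_pos (by linarith), ?_⟩
        rw [div_lt_one (by linarith)]; linarith
      · rintro ⟨hx0, hx1⟩
        refine ⟨1/(2*x), ?_, ?_⟩
        · have : (1:ℝ)/2 < 1/(2*x) :=
            one_div_lt_one_div_of_lt (by linarith) (by linarith)
          simpa [mem_Ioi] using this
        · show 1/(2*(1/(2*x))) = x
          field_simp
    have hderiv : ∀ t ∈ Ioi (1/2:ℝ), HasDerivWithinAt φ (φ' t) (Ioi (1/2:ℝ)) t := by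
      intro t ht
      simp only [mem_Ioi] at ht
      have ht0 : (0:ℝ) < t := by linarith
      have h1 : HasDerivAt (fun t : ℝ => 2*t) 2 t := by
        simpa using (hasDerivAt_id t).const_mul (2:ℝ)
      have h2 : HasDerivAt (fun t : ℝ => (2*t)⁻¹) (-2/(2*t)^2) t :=
        h1.inv (by positivity)
      have h3 : HasDerivAt φ (φ' t) t := by
        have : φ = fun t : ℝ => (2*t)⁻¹ := by
          funext u; simp [hφdef, one_div]
        rw [this, hφ'def]
        convert h2 using 1
        field_simp
      exact h3.hasDerivWithinAt
    have hinj : InjOn φ (Ioi (1/2:ℝ)) := by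
      intro a ha b hb hab
      simp only [mem_Ioi] at ha hb
      have ha0 : a ≠ 0 := by positivity
      have hb0 : b ≠ 0 := by positivity
      simp only [hφdef] at hab
      field_simp at hab
      linarith
    have hcv := lintegral_image_eq_lintegral_abs_det_fderiv_mul (volume : Measure ℝ)
      measurableSet_Ioi (f' := fun t => (1 : ℝ →L[ℝ] ℝ).smulRight (φ' t))
      (fun x hx => (hderiv x hx).hasFDerivWithinAt) hinj g
    simp only [ContinuousLinearMap.smulRight_one_eq_toSpanSingleton, ContinuousLinearMap.det_toSpanSingleton] at hcv
    rw [himg] at hcv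
    -- pointwise bound
    have hbound : ∀ t ∈ Ioi (1/2:ℝ), G t ≤
        ENNReal.ofReal C * (ENNReal.ofReal |φ' t| * g (φ t)) := by
      intro t ht
      simp only [mem_Ioi] at ht
      have ht0 : (0:ℝ) < t := by linarith
      have h2t : (0:ℝ) < 2*t := by linarith
      set s : ℝ := 1/(2*t) with hs
      have hs0 : 0 < s := div_pos one_pos h2t
      have hs1 : s < 1 := by rw [hs, div_lt_one h2t]; linarith
      have he1 : 1/(2*s) = t := by rw [hs]; field_simp
      have he2 : 1/s = 2*t := by rw [hs]; field_simp
      have hinner : (∫⁻ l in Ioc t (2*t), h l * ENNReal.ofReal (l ^ (2*α)))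
          ≤ ENNReal.ofReal ((2*t) ^ (2*α)) * ENNReal.ofReal (C * F s ^ 2) := by
        calc ∫⁻ l in Ioc t (2*t), h l * ENNReal.ofReal (l ^ (2*α))
            ≤ ∫⁻ l in Ioc t (2*t), ENNReal.ofReal ((2*t) ^ (2*α)) * h l := by
              refine setLIntegral_mono (hh.const_mul _) ?_
              intro l hl
              rw [mul_comm]
              exact mul_le_mul_left (ENNReal.ofReal_le_ofReal
                (Real.rpow_le_rpow (le_of_lt (lt_trans ht0 hl.1)) hl.2 h2α.le)) _
          _ = ENNReal.ofReal ((2*t) ^ (2*α)) * ∫⁻ l in Ioc t (2*t), h l :=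
              lintegral_const_mul _ hh
          _ ≤ ENNReal.ofReal ((2*t) ^ (2*α)) * ENNReal.ofReal (C * F s ^ 2) := by
              refine mul_le_mul_right ?_ _
              have h3 := htail s ⟨hs0, hs1⟩
              rwa [he1, he2] at h3
      have habs : |φ' t| = 1/(2*t^2) := by
        rw [hφ'def]
        rw [abs_div, abs_neg, abs_one, abs_of_pos (by positivity)]
      have hsinv : s ^ α = ((2*t) ^ α)⁻¹ := by
        rw [hs, one_div, Real.inv_rpow h2t.le]
      have hpow2 : ((2*t) ^ α) ^ 2 = (2*t) ^ (2*α) := by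
        rw [← Real.rpow_natCast ((2*t) ^ α) 2, ← Real.rpow_mul h2t.le]
        norm_num [mul_comm]
      have hreal : (2*t) ^ (2*α) * (C * F s ^ 2) * (1/t)
          = C * ((1/(2*t^2)) * ((F s / s ^ α) ^ 2 * (1/s))) := by
        rw [hsinv, he2, div_inv_eq_mul, mul_pow, hpow2]
        field_simp
      calc G t ≤ (ENNReal.ofReal ((2*t) ^ (2*α)) * ENNReal.ofReal (C * F s ^ 2))
            * ENNReal.ofReal (1/t) := mul_le_mul_left hinner _
        _ = ENNReal.ofReal C * (ENNReal.ofReal |φ' t| * g (φ t)) := by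
            have hφt : φ t = s := rfl
            rw [hφt, habs, hgdef]
            rw [← ENNReal.ofReal_mul (Real.rpow_nonneg h2t.le _),
              ← ENNReal.ofReal_mul (by positivity), hreal,
              ENNReal.ofReal_mul hC.le,
              ENNReal.ofReal_mul (by positivity)]
    calc ∫⁻ t in Ioi (1/2:ℝ), G t
        ≤ ∫⁻ t in Ioi (1/2:ℝ), ENNReal.ofReal C * (ENNReal.ofReal |φ' t| * g (φ t)) := by
          exact setLIntegral_mono' measurableSet_Ioi hbound
      _ = ENNReal.ofReal C * ∫⁻ t in Ioi (1/2:ℝ), ENNReal.ofReal |φ' t| * g (φ t) :=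
          lintegral_const_mul' _ _ ENNReal.ofReal_ne_top
      _ = ENNReal.ofReal C * ∫⁻ x in Ioo (0:ℝ) 1, g x := by rw [hcv]
      _ < ⊤ := ENNReal.mul_lt_top ENNReal.ofReal_lt_top hbesov
  exact ENNReal.add_lt_top.mpr ⟨key1, key2⟩
end

section
/- Let λ, t ∈ ℝ₊ and let φ_λ be the elementary spherical function on a Damek-Ricci space with homogeneous dimension Q. Then |1 − φ_λ(t)| ≤ (t²/2)(4λ² + Q²/4). -/
private lemma Dd_eq_aux (m k : ℕ) (hm : 0 < m) (a b : ℝ) (ha : 0 < a) (hb : 0 < b) :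
    ((m + k : ℕ) : ℝ) * a^(m+k-1) * (b*(1/2)) * b^k + a^(m+k) * ((k:ℝ) * b^(k-1) * (a*(1/2)))
    = (((m:ℝ) + k)/2 * (b/a) + (k:ℝ)/2 * (a/b)) * (a^(m+k) * b^k) := by
  obtain ⟨m', rfl⟩ : ∃ m', m = m'+1 := ⟨m-1, (Nat.succ_pred_eq_of_pos hm).symm⟩
  cases k with
  | zero => push_cast; field_simp; ring
  | succ j =>
      push_cast
      have h1 : m' + 1 + (j+1) - 1 = m' + j + 1 := by omega
      rw [h1]
      field_simp
      ring

/-- the spherical function estimate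
|1 − φ_λ(t)| ≤ (t²/2)(4λ² + Q²/4) on a Damek-Ricci space with homogeneous
dimension Q = m/2 + k, where φ λ is characterized as the smooth solution of
the radial ODE φ'' + ((m+k)/2 coth(t/2) + (k/2) tanh(t/2)) φ' = −(λ²+Q²/4) φ
with φ(0) = 1, φ'(0) = 0 and |φ| ≤ 1. -/
theorem spherical_upper_bound
    (m k : ℕ) (hm : 0 < m) (Q : ℝ) (hQ : Q = m / 2 + k)
    (φ : ℝ → ℝ → ℝ)
    (hsmooth : ∀ lam : ℝ, ContDiff ℝ 2 (φ lam))
    (hODE : ∀ lam t : ℝ, 0 < t →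
      deriv (deriv (φ lam)) t
        + ((m + k) / 2 * (Real.cosh (t/2) / Real.sinh (t/2))
            + k / 2 * Real.tanh (t/2)) * deriv (φ lam) t
        = -(lam ^ 2 + Q ^ 2 / 4) * φ lam t)
    (hone : ∀ lam : ℝ, φ lam 0 = 1)
    (hder : ∀ lam : ℝ, deriv (φ lam) 0 = 0)
    (hbdd : ∀ lam t : ℝ, 0 ≤ t → |φ lam t| ≤ 1) :
    ∀ lam t : ℝ, 0 ≤ lam → 0 ≤ t →
      |1 - φ lam t| ≤ t ^ 2 / 2 * (4 * lam ^ 2 + Q ^ 2 / 4) := by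
  intro lam t hlam ht
  set c : ℝ := lam ^ 2 + Q ^ 2 / 4 with hc
  have hc0 : 0 ≤ c := by positivity
  set n : ℕ := m + k with hn
  set D : ℝ → ℝ := fun s => Real.sinh (s/2) ^ n * Real.cosh (s/2) ^ k with hD
  -- derivative of D
  have hDder : ∀ s : ℝ, HasDerivAt D
      ((n : ℝ) * Real.sinh (s/2) ^ (n-1) * (Real.cosh (s/2) * (1/2)) * Real.cosh (s/2) ^ k
        + Real.sinh (s/2) ^ n * ((k : ℝ) * Real.cosh (s/2) ^ (k-1) * (Real.sinh (s/2) * (1/2)))) s := by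
    intro s
    have hs : HasDerivAt (fun s : ℝ => Real.sinh (s/2)) (Real.cosh (s/2) * (1/2)) s := by
      simpa [Function.comp_def] using (Real.hasDerivAt_sinh (s/2)).comp s ((hasDerivAt_id s).div_const 2)
    have hcsh : HasDerivAt (fun s : ℝ => Real.cosh (s/2)) (Real.sinh (s/2) * (1/2)) s := by
      simpa [Function.comp_def] using (Real.hasDerivAt_cosh (s/2)).comp s ((hasDerivAt_id s).div_const 2)
    exact (hs.pow n).mul (hcsh.pow k)
  have hDcont : Continuous D :=
    ((Real.continuous_sinh.comp (continuous_id.div_const 2)).pow n).mul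
      ((Real.continuous_cosh.comp (continuous_id.div_const 2)).pow k)
  -- D nonneg / positive / monotone on [0,∞)
  have hDpos : ∀ s : ℝ, 0 < s → 0 < D s := by
    intro s hs
    have h1 : 0 < Real.sinh (s/2) := Real.sinh_pos_iff.mpr (by linarith)
    have h2 : 0 < Real.cosh (s/2) := Real.cosh_pos _
    positivity
  have hDnonneg : ∀ s : ℝ, 0 ≤ s → 0 ≤ D s := by
    intro s hs
    have h1 : 0 ≤ Real.sinh (s/2) := Real.sinh_nonneg_iff.mpr (by linarith)
    have h2 : 0 ≤ Real.cosh (s/2) := (Real.cosh_pos _).le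
    positivity
  have hDmono : ∀ s u : ℝ, 0 ≤ s → s ≤ u → D s ≤ D u := by
    intro s u hs hsu
    have h1 : 0 ≤ Real.sinh (s/2) := Real.sinh_nonneg_iff.mpr (by linarith)
    have h2 : Real.sinh (s/2) ≤ Real.sinh (u/2) := Real.sinh_le_sinh.mpr (by linarith)
    have h3 : 0 ≤ Real.cosh (s/2) := (Real.cosh_pos _).le
    have h4 : Real.cosh (s/2) ≤ Real.cosh (u/2) := by
      rw [Real.cosh_le_cosh, abs_of_nonneg (by linarith : (0:ℝ) ≤ s/2),
        abs_of_nonneg (by linarith : (0:ℝ) ≤ u/2)]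
      linarith
    exact mul_le_mul (pow_le_pow_left₀ h1 h2 n) (pow_le_pow_left₀ h3 h4 k)
      (pow_nonneg h3 k) (pow_nonneg (le_trans h1 h2) n)
  -- the derivative of D equals A * D for s > 0
  have hDd_eq : ∀ s : ℝ, 0 < s →
      ((n : ℝ) * Real.sinh (s/2) ^ (n-1) * (Real.cosh (s/2) * (1/2)) * Real.cosh (s/2) ^ k
        + Real.sinh (s/2) ^ n * ((k : ℝ) * Real.cosh (s/2) ^ (k-1) * (Real.sinh (s/2) * (1/2))))
      = ((m + k) / 2 * (Real.cosh (s/2) / Real.sinh (s/2)) + k / 2 * Real.tanh (s/2)) * D s := by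
    intro s hs
    have ha : 0 < Real.sinh (s/2) := Real.sinh_pos_iff.mpr (by linarith)
    have hb : 0 < Real.cosh (s/2) := Real.cosh_pos _
    rw [Real.tanh_eq_sinh_div_cosh]
    exact Dd_eq_aux m k hm _ _ ha hb
  -- φ facts
  have hφdiff : Differentiable ℝ (φ lam) := (hsmooth lam).differentiable (by norm_num)
  have hφ'cd : ContDiff ℝ 1 (deriv (φ lam)) := by
    have := (contDiff_succ_iff_deriv (n := 1) (f := φ lam)).mp
      (by norm_num; exact hsmooth lam)
    exact this.2.2
  have hφ'diff : Differentiable ℝ (deriv (φ lam)) := hφ'cd.differentiable one_ne_zero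
  have hφ'cont : Continuous (deriv (φ lam)) := hφ'diff.continuous
  have hφcont : Continuous (φ lam) := hφdiff.continuous
  -- key bound on the derivative of φ
  have key : ∀ s : ℝ, 0 < s → |deriv (φ lam) s| ≤ c * s := by
    intro s hs
    set g : ℝ → ℝ := fun u => D u * deriv (φ lam) u with hg
    have hgder : ∀ u ∈ Set.Ioo (0:ℝ) s, HasDerivAt g (-c * (D u * φ lam u)) u := by
      intro u hu
      have h1 := (hDder u).mul ((hφ'diff u).hasDerivAt)
      have h2' := hODE lam u hu.1
      rw [hDd_eq u hu.1] at h1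
      convert h1 using 1
      · rfl
      · rfl
      · rfl
      have : deriv (deriv (φ lam)) u
          = -(lam ^ 2 + Q ^ 2 / 4) * φ lam u
            - ((m + k) / 2 * (Real.cosh (u/2) / Real.sinh (u/2))
                + k / 2 * Real.tanh (u/2)) * deriv (φ lam) u := by linarith
      rw [this, hc]; ring
    have hgcont : ContinuousOn g (Set.Icc 0 s) :=
      (hDcont.mul hφ'cont).continuousOn
    have hint : IntervalIntegrable (fun u => -c * (D u * φ lam u)) MeasureTheory.volume 0 s :=
      ((continuous_const.mul (hDcont.mul hφcont))).intervalIntegrable 0 s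
    have hftc : ∫ u in (0:ℝ)..s, -c * (D u * φ lam u) = g s - g 0 :=
      intervalIntegral.integral_eq_sub_of_hasDeriv_right_of_le hs.le hgcont
        (fun u hu => ((hgder u hu).hasDerivWithinAt)) hint
    have hg0 : g 0 = 0 := by
      have hsinh0 : Real.sinh (0/2 : ℝ) = 0 := by norm_num
      have hn0 : n ≠ 0 := by omega
      simp only [hg, hD, hsinh0, zero_pow hn0, zero_mul]
    have hbound : ‖∫ u in (0:ℝ)..s, -c * (D u * φ lam u)‖ ≤ (c * D s) * |s - 0| := by
      apply intervalIntegral.norm_integral_le_of_norm_le_const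
      intro u hu
      rw [Set.uIoc_of_le hs.le] at hu
      have hu0 : 0 < u := hu.1
      have h1 : |φ lam u| ≤ 1 := hbdd lam u hu0.le
      have h2' : 0 ≤ D u := hDnonneg u hu0.le
      have h3 : D u ≤ D s := hDmono u s hu0.le hu.2
      rw [Real.norm_eq_abs, abs_mul, abs_mul, abs_neg, abs_of_nonneg hc0,
        abs_of_nonneg h2']
      calc c * (D u * |φ lam u|) ≤ c * (D u * 1) := by
            apply mul_le_mul_of_nonneg_left _ hc0
            exact mul_le_mul_of_nonneg_left h1 h2'
        _ = c * D u := by ring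
        _ ≤ c * D s := mul_le_mul_of_nonneg_left h3 hc0
    rw [hftc, hg0, sub_zero] at hbound
    have hDs : 0 < D s := hDpos s hs
    rw [Real.norm_eq_abs, hg, abs_mul, abs_of_nonneg hDs.le, sub_zero,
      abs_of_nonneg hs.le] at hbound
    calc |deriv (φ lam) s| = (D s * |deriv (φ lam) s|) / D s := by
          field_simp
      _ ≤ (c * D s * s) / D s := by
          gcongr
      _ = c * s := by field_simp
  -- integrate the derivative bound
  have hftc2 : ∫ u in (0:ℝ)..t, deriv (φ lam) u = φ lam t - φ lam 0 :=
    intervalIntegral.integral_eq_sub_of_hasDerivAt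
      (fun u _ => (hφdiff u).hasDerivAt) (hφ'cont.intervalIntegrable 0 t)
  have hbound2 : ‖∫ u in (0:ℝ)..t, deriv (φ lam) u‖ ≤ |∫ u in (0:ℝ)..t, c * u| := by
    refine (intervalIntegral.norm_integral_le_of_norm_le ht ?_ ?_).trans (le_abs_self _)
    · refine Filter.Eventually.of_forall (fun u hu => ?_)
      rw [Real.norm_eq_abs]
      exact key u hu.1
    · exact (continuous_const.mul continuous_id).intervalIntegrable 0 t
  have hval : ∫ u in (0:ℝ)..t, c * u = c * (t ^ 2 / 2) := by
    rw [intervalIntegral.integral_const_mul]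
    simp [integral_id]
  rw [hftc2, hone lam, hval] at hbound2
  rw [Real.norm_eq_abs] at hbound2
  have h5 : |1 - φ lam t| ≤ c * (t ^ 2 / 2) := by
    rw [abs_sub_comm]
    calc |φ lam t - 1| ≤ |c * (t ^ 2 / 2)| := hbound2
      _ = c * (t ^ 2 / 2) := abs_of_nonneg (by positivity)
  calc |1 - φ lam t| ≤ c * (t ^ 2 / 2) := h5
    _ ≤ t ^ 2 / 2 * (4 * lam ^ 2 + Q ^ 2 / 4) := by
      rw [hc]; nlinarith [sq_nonneg lam, sq_nonneg t, sq_nonneg (t * lam)]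
end

section
/- Let d ≥ 2, α ∈ (0,2), γ ∈ ℝ. Suppose g : ℝ₊ → [0,∞) is measurable and ∫_{1/t}^∞ g(λ) dλ ≤ C t^{2α+d−1}(log(1/t))^{2γ} for all sufficiently small t ∈ (0,1). Then ∫_{1/t}^∞ g(λ) λ^{d−1} dλ ≤ C' t^{2α}(log(1/t))^{2γ} for all sufficiently small t ∈ (0,1). -/
open Set MeasureTheory ENNReal



-- summability
lemma aux_summable (p q : ℝ) (hq0 : 0 < q) (hq1 : q < 1) :
    Summable (fun i : ℕ => ((i : ℝ) + 1) ^ p * q ^ i) := by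
  set k := ⌈p⌉₊
  have hbase : Summable (fun i : ℕ => ((i : ℝ)) ^ k * q ^ i) :=
    summable_pow_mul_geometric_of_norm_lt_one k (by rw [Real.norm_eq_abs, abs_of_pos hq0]; exact hq1)
  have hshift : Summable (fun i : ℕ => ((i : ℝ) + 1) ^ k * q ^ (i + 1)) := by
    have := (summable_nat_add_iff 1).mpr hbase
    simpa using this
  have hshift2 : Summable (fun i : ℕ => ((i : ℝ) + 1) ^ k * q ^ i) := by
    have := hshift.mul_left q⁻¹
    refine this.congr fun i => ?_
    field_simp [pow_succ]
    ring
  refine Summable.of_nonneg_of_le (fun i => by positivity) (fun i => ?_) hshift2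
  have h1 : (1 : ℝ) ≤ (i : ℝ) + 1 := by simp [Nat.cast_nonneg]
  have : ((i : ℝ) + 1) ^ p ≤ ((i : ℝ) + 1) ^ (k : ℝ) :=
    Real.rpow_le_rpow_of_exponent_le h1 (Nat.le_ceil p)
  rw [Real.rpow_natCast] at this
  exact mul_le_mul_of_nonneg_right this (by positivity)

lemma aux_cover (t : ℝ) (ht : 0 < t) :
    Ioi (1/t) = ⋃ i : ℕ, Ioc ((2:ℝ)^i / t) ((2:ℝ)^(i+1) / t) := by
  ext x
  simp only [mem_Ioi, mem_iUnion, mem_Ioc]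
  constructor
  · intro hx
    have hex : ∃ i : ℕ, x ≤ (2:ℝ)^(i+1) / t := by
      obtain ⟨n, hn⟩ := exists_nat_ge (x * t)
      refine ⟨n, ?_⟩
      have hp : (n:ℝ) < (2:ℝ)^n := by
        exact_mod_cast (Nat.lt_two_pow_self (n := n))
      have h2 : (n : ℝ) + 1 ≤ (2:ℝ)^(n+1) := by
        have h1 : (1:ℝ) ≤ (2:ℝ)^n := one_le_pow₀ (by norm_num)
        rw [pow_succ]; nlinarith
      rw [le_div_iff₀ ht]
      calc x * t ≤ n := hn
        _ ≤ (n:ℝ) + 1 := by linarith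
        _ ≤ (2:ℝ)^(n+1) := h2
    classical
    have hj : x ≤ (2:ℝ)^(Nat.find hex + 1) / t := Nat.find_spec hex
    refine ⟨Nat.find hex, ?_, hj⟩
    cases' Nat.eq_zero_or_pos (Nat.find hex) with h h
    · rw [h]; simpa using hx
    · obtain ⟨m, hm⟩ : ∃ m, Nat.find hex = m + 1 :=
        ⟨Nat.find hex - 1, (Nat.succ_pred_eq_of_pos h).symm⟩
      have hmin := Nat.find_min hex (m := m) (by omega)
      push_neg at hmin
      rw [hm]
      exact hmin
  · rintro ⟨i, h1, _⟩
    have h0 : (1:ℝ) ≤ (2:ℝ)^i := one_le_pow₀ (by norm_num)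
    have : (1:ℝ)/t ≤ (2:ℝ)^i / t := by gcongr
    linarith

lemma aux_key (d α γ C t : ℝ) (hd : 2 ≤ d) (hα : 0 < α) (hC : 0 ≤ C)
    (i : ℕ) (ht : 0 < t) (ht2 : t < 1/2) :
    ((2:ℝ)^(i+1) / t) ^ (d-1) * (C * (t / (2:ℝ)^i) ^ (2*α + d - 1) *
        Real.log (1 / (t / (2:ℝ)^i)) ^ (2*γ))
      ≤ C * (2:ℝ)^(d-1) * t^(2*α) * Real.log (1/t) ^ (2*γ) *
        (((i:ℝ)+1) ^ |2*γ| * ((2:ℝ)^(-(2*α)))^i) := by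
  have h2i : (0:ℝ) < (2:ℝ)^i := by positivity
  set X : ℝ := t / (2:ℝ)^i with hXdef
  have hX : 0 < X := by positivity
  have hE : (0:ℝ) < Real.log 2 := Real.log_pos (by norm_num)
  have hL : Real.log 2 ≤ Real.log (1/t) := by
    apply Real.log_le_log (by norm_num)
    rw [le_div_iff₀ ht]; linarith
  set L : ℝ := Real.log (1/t) with hLdef
  have hL0 : 0 < L := lt_of_lt_of_le hE hL
  -- log (1/X) = i * log 2 + L
  have hlogX : Real.log (1/X) = (i:ℝ) * Real.log 2 + L := by
    rw [hXdef, one_div_div, Real.log_div (by positivity) (ne_of_gt ht), Real.log_pow, hLdef,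
      one_div, Real.log_inv]
    push_cast; ring
  -- (2^(i+1)/t) = 2 / X
  have h2X : (2:ℝ)^(i+1) / t = 2 / X := by
    rw [hXdef]; field_simp; ring
  -- main power identity
  have hpow : ((2:ℝ)^(i+1) / t) ^ (d-1) * X ^ (2*α + d - 1)
      = (2:ℝ)^(d-1) * (t^(2*α) * ((2:ℝ)^(-(2*α)))^i) := by
    rw [h2X, Real.div_rpow (by norm_num) hX.le]
    have e1 : 2*α + d - 1 = 2*α + (d-1) := by ring
    rw [e1, Real.rpow_add hX]
    have hXd : X ^ (d-1) ≠ 0 := ne_of_gt (Real.rpow_pos_of_pos hX _)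
    have e2 : X ^ (2*α) = t^(2*α) * ((2:ℝ)^(-(2*α)))^i := by
      rw [hXdef, Real.div_rpow ht.le h2i.le]
      rw [← Real.rpow_natCast 2 i, ← Real.rpow_natCast ((2:ℝ)^(-(2*α))) i,
        ← Real.rpow_mul (by norm_num), ← Real.rpow_mul (by norm_num),
        div_eq_mul_inv, ← Real.rpow_neg (by norm_num)]
      ring_nf
    field_simp
    rw [e2]
  -- log inequality
  have hlog : Real.log (1/X) ^ (2*γ) ≤ (((i:ℝ)+1) ^ |2*γ|) * L ^ (2*γ) := by
    rw [hlogX]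
    have hi1 : (1:ℝ) ≤ (i:ℝ) + 1 := by simp [Nat.cast_nonneg]
    rcases le_or_gt 0 γ with hγ | hγ
    · have habs : |2*γ| = 2*γ := abs_of_nonneg (by linarith)
      have hle : (i:ℝ) * Real.log 2 + L ≤ ((i:ℝ)+1) * L := by
        have : (i:ℝ) * Real.log 2 ≤ (i:ℝ) * L := by
          apply mul_le_mul_of_nonneg_left hL (Nat.cast_nonneg i)
        linarith
      calc ((i:ℝ) * Real.log 2 + L) ^ (2*γ)
          ≤ (((i:ℝ)+1) * L) ^ (2*γ) := by
            apply Real.rpow_le_rpow (by positivity) hle (by linarith)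
        _ = ((i:ℝ)+1) ^ (2*γ) * L ^ (2*γ) := Real.mul_rpow (by linarith) hL0.le
        _ = ((i:ℝ)+1) ^ |2*γ| * L ^ (2*γ) := by rw [habs]
    · have h1 : ((i:ℝ) * Real.log 2 + L) ^ (2*γ) ≤ L ^ (2*γ) := by
        apply Real.rpow_le_rpow_of_nonpos hL0
        · nlinarith [Nat.cast_nonneg (α := ℝ) i]
        · linarith
      have h2 : (1:ℝ) ≤ ((i:ℝ)+1) ^ |2*γ| := Real.one_le_rpow hi1 (abs_nonneg _)
      calc ((i:ℝ) * Real.log 2 + L) ^ (2*γ) ≤ L ^ (2*γ) := h1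
        _ ≤ ((i:ℝ)+1) ^ |2*γ| * L ^ (2*γ) := by
            nlinarith [Real.rpow_pos_of_pos hL0 (2*γ)]
  -- combine
  have hfac : (0:ℝ) ≤ C * ((2:ℝ)^(d-1) * (t^(2*α) * ((2:ℝ)^(-(2*α)))^i)) := by positivity
  calc ((2:ℝ)^(i+1) / t) ^ (d-1) * (C * X ^ (2*α + d - 1) * Real.log (1/X) ^ (2*γ))
      = (C * ((2:ℝ)^(d-1) * (t^(2*α) * ((2:ℝ)^(-(2*α)))^i))) * Real.log (1/X) ^ (2*γ) := by
        rw [← hpow]; ring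
    _ ≤ (C * ((2:ℝ)^(d-1) * (t^(2*α) * ((2:ℝ)^(-(2*α)))^i))) *
          ((((i:ℝ)+1) ^ |2*γ|) * L ^ (2*γ)) := mul_le_mul_of_nonneg_left hlog hfac
    _ = C * (2:ℝ)^(d-1) * t^(2*α) * L ^ (2*γ) * (((i:ℝ)+1) ^ |2*γ| * ((2:ℝ)^(-(2*α)))^i) := by
        ring


/-- if ∫_{1/t}^∞ g ≤ C t^{2α+d−1}(log(1/t))^{2γ} for small t,
then the weighted tails satisfy
∫_{1/t}^∞ g(λ) λ^{d−1} dλ ≤ C' t^{2α}(log(1/t))^{2γ} for small t. -/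
theorem weighted_tail_log_bound
    (d α γ : ℝ) (hd : 2 ≤ d) (hα : 0 < α) (hα2 : α < 2)
    (g : ℝ → ℝ≥0∞) (hg : Measurable g)
    (C : ℝ) (hC : 0 < C)
    (t₀ : ℝ) (ht₀ : 0 < t₀) (ht₀1 : t₀ ≤ 1)
    (htail : ∀ t : ℝ, 0 < t → t < t₀ →
      ∫⁻ l in Ioi (1/t), g l
        ≤ ENNReal.ofReal (C * t ^ (2*α + d - 1) * Real.log (1/t) ^ (2*γ))) :
    ∃ C' : ℝ, 0 < C' ∧ ∃ t₁ : ℝ, 0 < t₁ ∧ t₁ ≤ 1 ∧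
      ∀ t : ℝ, 0 < t → t < t₁ →
        ∫⁻ l in Ioi (1/t), g l * ENNReal.ofReal (l ^ (d-1))
          ≤ ENNReal.ofReal (C' * t ^ (2*α) * Real.log (1/t) ^ (2*γ)) := by
  set q : ℝ := (2:ℝ) ^ (-(2*α)) with hqdef
  have hq0 : 0 < q := Real.rpow_pos_of_pos (by norm_num) _
  have hq1 : q < 1 := Real.rpow_lt_one_of_one_lt_of_neg (by norm_num) (by linarith)
  set u : ℕ → ℝ := fun i => ((i:ℝ)+1) ^ |2*γ| * q ^ i with hudef
  have hsum : Summable u := aux_summable _ _ hq0 hq1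
  have hun : ∀ i, 0 ≤ u i := fun i => by
    apply mul_nonneg (Real.rpow_nonneg (by positivity) _) (by positivity)
  set S : ℝ := ∑' i, u i with hSdef
  have hS1 : (1:ℝ) ≤ S := by
    have h0 : u 0 = 1 := by simp [hudef]
    have := Summable.le_tsum hsum 0 (fun i _ => hun i)
    rw [h0] at this; exact this
  refine ⟨C * (2:ℝ)^(d-1) * S, by positivity, min t₀ (1/2),
    lt_min ht₀ (by norm_num), (min_le_left _ _).trans ht₀1, ?_⟩
  intro t ht ht1
  have htt₀ : t < t₀ := lt_of_lt_of_le ht1 (min_le_left _ _)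
  have ht2 : t < 1/2 := lt_of_lt_of_le ht1 (min_le_right _ _)
  have hL0 : 0 < Real.log (1/t) := by
    apply Real.log_pos
    rw [lt_div_iff₀ ht]; linarith
  set L : ℝ := Real.log (1/t) with hLdef
  set c : ℝ := C * (2:ℝ)^(d-1) * t^(2*α) * L^(2*γ) with hcdef
  have hc0 : 0 ≤ c := by
    apply mul_nonneg (by positivity) (Real.rpow_nonneg hL0.le _)
  have hkey : ∀ i : ℕ,
      ∫⁻ l in Ioc ((2:ℝ)^i / t) ((2:ℝ)^(i+1) / t), g l * ENNReal.ofReal (l ^ (d-1))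
        ≤ ENNReal.ofReal (c * u i) := by
    intro i
    have h2i : (0:ℝ) < (2:ℝ)^i := by positivity
    have hAi : (0:ℝ) < (2:ℝ)^i / t := by positivity
    have ht' : 0 < t / (2:ℝ)^i := by positivity
    have ht'lt : t / (2:ℝ)^i < t₀ := by
      have : t / (2:ℝ)^i ≤ t := by
        apply div_le_self ht.le (one_le_pow₀ (by norm_num))
      linarith
    have htail' := htail _ ht' ht'lt
    rw [one_div_div] at htail'
    calc ∫⁻ l in Ioc ((2:ℝ)^i / t) ((2:ℝ)^(i+1) / t), g l * ENNReal.ofReal (l ^ (d-1))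
        ≤ ∫⁻ l in Ioc ((2:ℝ)^i / t) ((2:ℝ)^(i+1) / t),
            g l * ENNReal.ofReal (((2:ℝ)^(i+1) / t) ^ (d-1)) := by
          apply setLIntegral_mono (hg.mul_const _)
          intro x hx
          apply mul_le_mul_right
          apply ENNReal.ofReal_le_ofReal
          exact Real.rpow_le_rpow (le_of_lt (lt_trans hAi hx.1)) hx.2 (by linarith)
      _ = (∫⁻ l in Ioc ((2:ℝ)^i / t) ((2:ℝ)^(i+1) / t), g l) *
            ENNReal.ofReal (((2:ℝ)^(i+1) / t) ^ (d-1)) := lintegral_mul_const _ hg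
      _ ≤ (∫⁻ l in Ioi ((2:ℝ)^i / t), g l) * ENNReal.ofReal (((2:ℝ)^(i+1) / t) ^ (d-1)) := by
          exact mul_le_mul_left (lintegral_mono_set Ioc_subset_Ioi_self) _
      _ ≤ ENNReal.ofReal (C * (t / (2:ℝ)^i) ^ (2*α + d - 1) *
            Real.log ((2:ℝ)^i / t) ^ (2*γ)) *
            ENNReal.ofReal (((2:ℝ)^(i+1) / t) ^ (d-1)) := mul_le_mul_left htail' _
      _ = ENNReal.ofReal (((2:ℝ)^(i+1) / t) ^ (d-1) * (C * (t / (2:ℝ)^i) ^ (2*α + d - 1) *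
            Real.log ((2:ℝ)^i / t) ^ (2*γ))) := by
          rw [mul_comm, ← ENNReal.ofReal_mul (Real.rpow_nonneg (by positivity) _)]
      _ ≤ ENNReal.ofReal (c * u i) := by
          apply ENNReal.ofReal_le_ofReal
          have := aux_key d α γ C t hd hα hC.le i ht ht2
          rw [one_div_div] at this
          rw [hcdef, hudef, hLdef]
          calc _ ≤ C * (2:ℝ)^(d-1) * t^(2*α) * Real.log (1/t) ^ (2*γ) *
              (((i:ℝ)+1) ^ |2*γ| * ((2:ℝ)^(-(2*α)))^i) := this
            _ = _ := by rw [hqdef]; try ring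
  calc ∫⁻ l in Ioi (1/t), g l * ENNReal.ofReal (l ^ (d-1))
      = ∫⁻ l in ⋃ i : ℕ, Ioc ((2:ℝ)^i / t) ((2:ℝ)^(i+1) / t),
          g l * ENNReal.ofReal (l ^ (d-1)) := by rw [aux_cover t ht]
    _ ≤ ∑' i : ℕ, ∫⁻ l in Ioc ((2:ℝ)^i / t) ((2:ℝ)^(i+1) / t),
          g l * ENNReal.ofReal (l ^ (d-1)) := lintegral_iUnion_le _ _
    _ ≤ ∑' i : ℕ, ENNReal.ofReal (c * u i) := ENNReal.tsum_le_tsum hkey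
    _ = ENNReal.ofReal (∑' i : ℕ, c * u i) := by
        rw [ENNReal.ofReal_tsum_of_nonneg (fun i => mul_nonneg hc0 (hun i)) (hsum.mul_left c)]
    _ = ENNReal.ofReal (c * S) := by rw [hSdef, tsum_mul_left]
    _ = ENNReal.ofReal (C * (2:ℝ)^(d-1) * S * t^(2*α) * L^(2*γ)) := by
        rw [hcdef]; ring_nf
end

section
/- Let p ∈ (1,2], p' = p/(p−1), d ≥ 2, α ∈ (0,1], and β ∈ (dp'/(d + αp'), p']. Suppose F : [1,∞) → [0,∞) is measurable and there is C > 0 with ∫_1^s λ^{2p'} F(λ)^{p'} λ^{d−1} dλ ≤ C s^{(2−α)p'} for all s ≥ 1. Then ∫_1^∞ F(λ)^β λ^{d−1} dλ < ∞. -/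
open Set MeasureTheory ENNReal

set_option maxHeartbeats 1000000 in
/-- integrability of the Fourier transform of Hölder-Lipschitz
functions, abstract form. If ∫_1^s λ^{2p'} F(λ)^{p'} λ^{d−1} dλ ≤ C s^{(2−α)p'}
for all s ≥ 1, then ∫_1^∞ F(λ)^β λ^{d−1} dλ < ∞ for β ∈ (dp'/(d+αp'), p']. -/
theorem holder_lipschitz_integrability
    (p : ℝ) (hp1 : 1 < p) (hp2 : p ≤ 2)
    (p' : ℝ) (hp' : p' = p / (p - 1))
    (d : ℝ) (hd : 2 ≤ d)
    (α : ℝ) (hα : 0 < α) (hα1 : α ≤ 1)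
    (β : ℝ) (hβlow : d * p' / (d + α * p') < β) (hβhigh : β ≤ p')
    (F : ℝ → ℝ) (hF : Measurable F) (hFnonneg : ∀ l, 0 ≤ F l)
    (C : ℝ) (hC : 0 < C)
    (hgrowth : ∀ s : ℝ, 1 ≤ s →
      ∫⁻ l in Ioc (1:ℝ) s, ENNReal.ofReal (l ^ (2*p') * F l ^ p' * l ^ (d-1))
        ≤ ENNReal.ofReal (C * s ^ ((2-α) * p'))) :
    ∫⁻ l in Ioi (1:ℝ), ENNReal.ofReal (F l ^ β * l ^ (d-1)) < ⊤ := by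
  have hp0 : 0 < p - 1 := by linarith
  have hp'1 : 1 < p' := by
    rw [hp', lt_div_iff₀ hp0]; linarith
  have hp'0 : 0 < p' := by linarith
  have hβ0 : 0 < β := lt_trans (by positivity) hβlow
  set t : ℝ := -(2*β) + (d-1)*(1-β/p') with ht
  set e : ℝ := -(α*β) + d*(1-β/p') with he
  have hdenom : 0 < d + α * p' := by nlinarith
  have hdp' : d * p' < β * (d + α * p') := (div_lt_iff₀ hdenom).mp hβlow
  have hep' : e * p' < 0 := by
    have h3 : e * p' = d * p' - β * d - α * β * p' := by
      rw [he]; field_simp; ring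
    nlinarith
  have he0 : e < 0 := by nlinarith
  -- Step A: annulus bound
  obtain ⟨K, hK, hann⟩ : ∃ K : ℝ, 0 < K ∧ ∀ a : ℝ, 1 ≤ a →
      ∫⁻ l in Ioc a (2*a), ENNReal.ofReal (F l ^ β * l ^ (d-1))
        ≤ ENNReal.ofReal (K * a ^ e) := by
    refine ⟨C * 2 ^ ((2-α)*β) + C ^ (β/p') * 2 ^ ((2-α)*β) * 2 ^ |t|, by positivity, ?_⟩
    have hm0 : Measurable fun l : ℝ => ENNReal.ofReal (l ^ (2*p') * F l ^ p' * l ^ (d-1)) :=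
      (((measurable_id.pow_const _).mul (hF.pow_const _)).mul (measurable_id.pow_const _)).ennreal_ofReal
    have hm1 : Measurable fun l : ℝ => ENNReal.ofReal (l ^ (2*β) * F l ^ β * l ^ (d-1)) :=
      (((measurable_id.pow_const _).mul (hF.pow_const _)).mul (measurable_id.pow_const _)).ennreal_ofReal
    intro a ha
    have ha0 : (0:ℝ) < a := lt_of_lt_of_le one_pos ha
    have h2a : (1:ℝ) ≤ 2*a := by linarith
    have hsub : Ioc a (2*a) ⊆ Ioc 1 (2*a) := Ioc_subset_Ioc_left ha
    have hKle : C ^ (β/p') * 2 ^ ((2-α)*β) * 2 ^ |t| ≤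
        C * 2 ^ ((2-α)*β) + C ^ (β/p') * 2 ^ ((2-α)*β) * 2 ^ |t| := by
      have : (0:ℝ) < C * 2 ^ ((2-α)*β) := by positivity
      linarith
    rcases eq_or_lt_of_le hβhigh with heq | hlt
    · -- degenerate case β = p'
      have hee : e = -(α*β) := by rw [he, heq, div_self hp'0.ne']; ring
      have hgrowth' : ∫⁻ l in Ioc (1:ℝ) (2*a),
          ENNReal.ofReal (l ^ (2*β) * F l ^ β * l ^ (d-1))
          ≤ ENNReal.ofReal (C * (2*a) ^ ((2-α)*β)) := by
        simp only [heq]; exact hgrowth _ h2a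
      calc ∫⁻ l in Ioc a (2*a), ENNReal.ofReal (F l ^ β * l ^ (d-1))
          ≤ ∫⁻ l in Ioc a (2*a),
              ENNReal.ofReal (a ^ (-(2*β)) * (l ^ (2*β) * F l ^ β * l ^ (d-1))) := by
            refine setLIntegral_mono' measurableSet_Ioc (fun l hl => ?_)
            have hl0 : (0:ℝ) < l := ha0.trans hl.1
            refine ENNReal.ofReal_le_ofReal ?_
            have h1 : a ^ (2*β) ≤ l ^ (2*β) := Real.rpow_le_rpow ha0.le hl.1.le (by positivity)
            have h2 : (0:ℝ) < a ^ (2*β) := Real.rpow_pos_of_pos ha0 _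
            have key : 1 ≤ a ^ (-(2*β)) * l ^ (2*β) := by
              rw [Real.rpow_neg ha0.le, ← div_eq_inv_mul]
              exact (one_le_div h2).mpr h1
            have nn : 0 ≤ F l ^ β * l ^ (d-1) := by
              have := hFnonneg l; positivity
            calc F l ^ β * l ^ (d-1) = 1 * (F l ^ β * l ^ (d-1)) := by ring
              _ ≤ (a ^ (-(2*β)) * l ^ (2*β)) * (F l ^ β * l ^ (d-1)) :=
                  mul_le_mul_of_nonneg_right key nn
              _ = a ^ (-(2*β)) * (l ^ (2*β) * F l ^ β * l ^ (d-1)) := by ring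
        _ = ENNReal.ofReal (a ^ (-(2*β))) *
              ∫⁻ l in Ioc a (2*a), ENNReal.ofReal (l ^ (2*β) * F l ^ β * l ^ (d-1)) := by
            simp_rw [ENNReal.ofReal_mul (Real.rpow_nonneg ha0.le _)]
            exact lintegral_const_mul'' _ hm1.aemeasurable
        _ ≤ ENNReal.ofReal (a ^ (-(2*β))) * ENNReal.ofReal (C * (2*a) ^ ((2-α)*β)) := by
            gcongr
            exact (lintegral_mono_set hsub).trans hgrowth'
        _ ≤ ENNReal.ofReal ((C * 2 ^ ((2-α)*β) + C ^ (β/p') * 2 ^ ((2-α)*β) * 2 ^ |t|) * a ^ e) := by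
            rw [← ENNReal.ofReal_mul (Real.rpow_nonneg ha0.le _)]
            refine ENNReal.ofReal_le_ofReal ?_
            have hx : a ^ (-(2*β)) * (C * (2*a) ^ ((2-α)*β)) = (C * 2 ^ ((2-α)*β)) * a ^ e := by
              rw [hee, Real.mul_rpow two_pos.le ha0.le,
                show (-(α*β)) = ((2-α)*β) + (-(2*β)) by ring, Real.rpow_add ha0]
              ring
            rw [hx]
            have : (0:ℝ) ≤ a ^ e := Real.rpow_nonneg ha0.le _
            nlinarith [Real.rpow_pos_of_pos (show (0:ℝ) < 2 by norm_num) ((2-α)*β),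
              Real.rpow_pos_of_pos hC (β/p'), Real.rpow_pos_of_pos (show (0:ℝ) < 2 by norm_num) |t|,
              mul_pos (mul_pos (Real.rpow_pos_of_pos hC (β/p'))
                (Real.rpow_pos_of_pos (show (0:ℝ) < 2 by norm_num) ((2-α)*β)))
                (Real.rpow_pos_of_pos (show (0:ℝ) < 2 by norm_num) |t|)]
    · -- Hölder case β < p'
      have hp'β : 0 < p' - β := by linarith
      have hpq : (p'/β).HolderConjugate (p'/(p'-β)) := by
        rw [Real.holderConjugate_iff_eq_conjExponent ((one_lt_div hβ0).mpr hlt)]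
        field_simp
      set f1 : ℝ → ℝ≥0∞ := fun l => ENNReal.ofReal (l ^ (2*p') * F l ^ p' * l ^ (d-1)) ^ (β/p')
        with hf1
      set g1 : ℝ → ℝ≥0∞ := fun l => ENNReal.ofReal (l ^ t) with hg1
      have hmf : AEMeasurable f1 (volume.restrict (Ioc a (2*a))) :=
        (hm0.pow_const _).aemeasurable
      have hmg : AEMeasurable g1 (volume.restrict (Ioc a (2*a))) :=
        ((measurable_id.pow_const _).ennreal_ofReal).aemeasurable
      have hpoint : ∀ l ∈ Ioc a (2*a),
          ENNReal.ofReal (F l ^ β * l ^ (d-1)) = (f1 * g1) l := by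
        intro l hl
        have hl0 : (0:ℝ) < l := ha0.trans hl.1
        have hnn : (0:ℝ) ≤ l ^ (2*p') * F l ^ p' * l ^ (d-1) := by
          have := hFnonneg l; positivity
        simp only [Pi.mul_apply, hf1, hg1]
        rw [ENNReal.ofReal_rpow_of_nonneg hnn (by positivity),
          ← ENNReal.ofReal_mul (Real.rpow_nonneg hnn _)]
        congr 1
        rw [Real.mul_rpow (mul_nonneg (Real.rpow_nonneg hl0.le _) (Real.rpow_nonneg (hFnonneg l) _))
            (Real.rpow_nonneg hl0.le _),
          Real.mul_rpow (Real.rpow_nonneg hl0.le _) (Real.rpow_nonneg (hFnonneg l) _),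
          ← Real.rpow_mul hl0.le, ← Real.rpow_mul (hFnonneg l), ← Real.rpow_mul hl0.le,
          show 2*p' * (β/p') = 2*β by field_simp,
          show p' * (β/p') = β by field_simp]
        have e4 : l ^ (2*β) * l ^ ((d-1)*(β/p')) * l ^ t = l ^ (d-1) := by
          rw [← Real.rpow_add hl0, ← Real.rpow_add hl0]
          congr 1
          rw [ht]
          field_simp
          ring
        calc F l ^ β * l ^ (d-1) = F l ^ β * (l ^ (2*β) * l ^ ((d-1)*(β/p')) * l ^ t) := by
              rw [e4]
          _ = l ^ (2*β) * F l ^ β * l ^ ((d-1)*(β/p')) * l ^ t := by ring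
      rw [setLIntegral_congr_fun measurableSet_Ioc hpoint]
      refine le_trans (ENNReal.lintegral_mul_le_Lp_mul_Lq _ hpq hmf hmg) ?_
      have hfr : ∫⁻ l in Ioc a (2*a), f1 l ^ (p'/β)
          ≤ ENNReal.ofReal (C * (2*a) ^ ((2-α)*p')) := by
        have hfx : ∀ l, f1 l ^ (p'/β) =
            ENNReal.ofReal (l ^ (2*p') * F l ^ p' * l ^ (d-1)) := by
          intro l
          rw [hf1, ← ENNReal.rpow_mul,
            show (β/p') * (p'/β) = 1 by field_simp, ENNReal.rpow_one]
        simp_rw [hfx]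
        exact (lintegral_mono_set hsub).trans (hgrowth _ h2a)
      have hgq : ∫⁻ l in Ioc a (2*a), g1 l ^ (p'/(p'-β))
          ≤ ENNReal.ofReal ((a ^ t * 2 ^ |t|) ^ (p'/(p'-β))) * ENNReal.ofReal a := by
        have hq0 : (0:ℝ) ≤ p'/(p'-β) := by positivity
        calc ∫⁻ l in Ioc a (2*a), g1 l ^ (p'/(p'-β))
            ≤ ∫⁻ _ in Ioc a (2*a), ENNReal.ofReal ((a ^ t * 2 ^ |t|) ^ (p'/(p'-β))) := by
              refine setLIntegral_mono' measurableSet_Ioc (fun l hl => ?_)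
              have hl0 : (0:ℝ) < l := ha0.trans hl.1
              rw [hg1, ENNReal.ofReal_rpow_of_nonneg (Real.rpow_nonneg hl0.le _) hq0]
              refine ENNReal.ofReal_le_ofReal
                (Real.rpow_le_rpow (Real.rpow_nonneg hl0.le _) ?_ hq0)
              rcases le_or_gt 0 t with htn | htn
              · have h1 : l ^ t ≤ (2*a) ^ t :=
                  Real.rpow_le_rpow hl0.le hl.2 htn
                rw [Real.mul_rpow two_pos.le ha0.le, abs_of_nonneg htn] at *
                linarith [h1]
              · have h1 : l ^ t ≤ a ^ t :=
                  Real.rpow_le_rpow_of_nonpos ha0 hl.1.le htn.le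
                have h2 : (1:ℝ) ≤ 2 ^ |t| :=
                  Real.one_le_rpow one_le_two (abs_nonneg t)
                nlinarith [Real.rpow_nonneg ha0.le t]
          _ = ENNReal.ofReal ((a ^ t * 2 ^ |t|) ^ (p'/(p'-β))) * ENNReal.ofReal a := by
              rw [setLIntegral_const, Real.volume_Ioc]
              congr 1
              ring_nf
      have h1r : 1/(p'/β) = β/p' := one_div_div _ _
      have h1q : 1/(p'/(p'-β)) = (p'-β)/p' := one_div_div _ _
      rw [h1r, h1q]
      calc (∫⁻ l in Ioc a (2*a), f1 l ^ (p'/β)) ^ (β/p') *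
            (∫⁻ l in Ioc a (2*a), g1 l ^ (p'/(p'-β))) ^ ((p'-β)/p')
          ≤ ENNReal.ofReal (C * (2*a) ^ ((2-α)*p')) ^ (β/p') *
            (ENNReal.ofReal ((a ^ t * 2 ^ |t|) ^ (p'/(p'-β))) * ENNReal.ofReal a) ^ ((p'-β)/p') := by
            exact mul_le_mul' (ENNReal.rpow_le_rpow hfr (by positivity))
              (ENNReal.rpow_le_rpow hgq (by positivity))
        _ = ENNReal.ofReal ((C * (2*a) ^ ((2-α)*p')) ^ (β/p') *
              ((a ^ t * 2 ^ |t|) * a ^ ((p'-β)/p'))) := by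
            have hb0 : (0:ℝ) ≤ (p'-β)/p' := by positivity
            have hat : (0:ℝ) ≤ a ^ t * 2 ^ |t| :=
              mul_nonneg (Real.rpow_nonneg ha0.le _) (Real.rpow_nonneg two_pos.le _)
            have hC2a : (0:ℝ) ≤ C * (2*a) ^ ((2-α)*p') :=
              mul_nonneg hC.le (Real.rpow_nonneg (by linarith) _)
            rw [ENNReal.ofReal_rpow_of_nonneg hC2a (by positivity),
              ENNReal.mul_rpow_of_nonneg _ _ hb0,
              ENNReal.ofReal_rpow_of_nonneg (Real.rpow_nonneg hat _) hb0,
              ENNReal.ofReal_rpow_of_nonneg ha0.le hb0]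
            have hcol : ((a ^ t * 2 ^ |t|) ^ (p'/(p'-β))) ^ ((p'-β)/p') = a ^ t * 2 ^ |t| := by
              rw [← Real.rpow_mul hat,
                show (p'/(p'-β)) * ((p'-β)/p') = 1 by field_simp, Real.rpow_one]
            rw [hcol, ← ENNReal.ofReal_mul hat,
              ← ENNReal.ofReal_mul (Real.rpow_nonneg (mul_nonneg hC.le (Real.rpow_nonneg (by linarith) _)) _)]
        _ ≤ ENNReal.ofReal ((C * 2 ^ ((2-α)*β) + C ^ (β/p') * 2 ^ ((2-α)*β) * 2 ^ |t|) * a ^ e) := by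
            refine ENNReal.ofReal_le_ofReal ?_
            have hsp : (C * (2*a) ^ ((2-α)*p')) ^ (β/p')
                = C ^ (β/p') * (2 ^ ((2-α)*β) * a ^ ((2-α)*β)) := by
              rw [Real.mul_rpow hC.le (Real.rpow_nonneg (by linarith) _),
                ← Real.rpow_mul (by linarith : (0:ℝ) ≤ 2*a),
                show (2-α)*p' * (β/p') = (2-α)*β by field_simp,
                Real.mul_rpow two_pos.le ha0.le]
            have haee : a ^ ((2-α)*β) * (a ^ t * a ^ ((p'-β)/p')) = a ^ e := by
              rw [← Real.rpow_add ha0, ← Real.rpow_add ha0]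
              congr 1
              rw [ht, he]
              field_simp
              ring
            have hre : (C ^ (β/p') * (2 ^ ((2-α)*β) * a ^ ((2-α)*β))) * (a ^ t * 2 ^ |t| * a ^ ((p'-β)/p'))
                = (C ^ (β/p') * 2 ^ ((2-α)*β) * 2 ^ |t|) * (a ^ ((2-α)*β) * (a ^ t * a ^ ((p'-β)/p'))) := by
              ring
            rw [hsp, hre, haee]
            exact mul_le_mul_of_nonneg_right hKle (Real.rpow_nonneg ha0.le _)
  -- Step B: dyadic decomposition
  have hUnion : Ioi (1:ℝ) = ⋃ n : ℕ, Ioc ((2:ℝ)^n) ((2:ℝ)^(n+1)) := by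
    ext x
    simp only [mem_Ioi, mem_iUnion, mem_Ioc]
    constructor
    · intro hx
      obtain ⟨m, hm⟩ := pow_unbounded_of_one_lt x (one_lt_two (α := ℝ))
      have hex : ∃ n : ℕ, x ≤ (2:ℝ)^(n+1) :=
        ⟨m, le_trans hm.le (pow_le_pow_right₀ one_le_two (Nat.le_succ m))⟩
      classical
      refine ⟨Nat.find hex, ?_, Nat.find_spec hex⟩
      rcases Nat.eq_zero_or_pos (Nat.find hex) with h0 | hpos
      · rw [h0]; simpa using hx
      · obtain ⟨k, hk⟩ := Nat.exists_eq_succ_of_ne_zero hpos.ne'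
        have := Nat.find_min hex (m := k) (by omega)
        push_neg at this
        rw [hk]; exact this
    · rintro ⟨n, hn, -⟩
      exact lt_of_le_of_lt (one_le_pow₀ (one_le_two (α := ℝ))) hn
  rw [hUnion, lintegral_iUnion (fun n => measurableSet_Ioc)]
  swap
  · intro m n hmn
    rcases hmn.lt_or_gt with h | h
    · simp only [Function.onFun]
      rw [Set.Ioc_disjoint_Ioc]
      exact le_trans (min_le_left _ _) (le_max_of_le_right (pow_le_pow_right₀ one_le_two (show m+1 ≤ n by omega)))
    · simp only [Function.onFun]
      rw [Set.Ioc_disjoint_Ioc]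
      exact le_trans (min_le_right _ _) (le_max_of_le_left (pow_le_pow_right₀ one_le_two (show n+1 ≤ m by omega)))
  have hsum : ∀ n : ℕ, ∫⁻ l in Ioc ((2:ℝ)^n) ((2:ℝ)^(n+1)), ENNReal.ofReal (F l ^ β * l ^ (d-1))
      ≤ ENNReal.ofReal K * ENNReal.ofReal ((2:ℝ)^e) ^ n := by
    intro n
    have h1 : (1:ℝ) ≤ (2:ℝ)^n := one_le_pow₀ one_le_two
    have h2 : ((2:ℝ)^(n+1)) = 2 * (2:ℝ)^n := by ring
    rw [h2]
    refine le_trans (hann _ h1) ?_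
    rw [ENNReal.ofReal_mul hK.le]
    gcongr
    have : ((2:ℝ)^n) ^ e = ((2:ℝ)^e)^n := by
      rw [← Real.rpow_natCast 2 n, ← Real.rpow_mul (by norm_num), mul_comm,
        Real.rpow_mul (by norm_num), Real.rpow_natCast]
    rw [this, ENNReal.ofReal_pow (by positivity)]
  refine lt_of_le_of_lt (ENNReal.tsum_le_tsum hsum) ?_
  rw [ENNReal.tsum_mul_left, ENNReal.tsum_geometric]
  have hr1 : ENNReal.ofReal ((2:ℝ)^e) < 1 := by
    rw [← ENNReal.ofReal_one]
    exact ENNReal.ofReal_lt_ofReal_iff_of_nonneg (by positivity) |>.mpr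
      (Real.rpow_lt_one_of_one_lt_of_neg one_lt_two he0)
  exact ENNReal.mul_lt_top ENNReal.ofReal_lt_top
    (ENNReal.inv_lt_top.mpr (tsub_pos_of_lt hr1))
end

section
/- Let k ∈ (0,2], δ₀ > 0, and let ω be a k-th order modulus of continuity on [0,δ₀]. Define I₁(t) = C₄ t⁴ ∫_t^{δ₀} ω(λ)²/λ⁵ dλ + C₆ t⁴ for t ∈ (0,δ₀]. If ω ∈ 𝒵_k (i.e. ∫_t^{δ₀} ω(s)s^{−1−k}ds ≤ C ω(t)t^{−k}), then I₁(t) ≤ C₉ ω(t)² for all t ∈ (0,δ₀]. -/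
open Set MeasureTheory

/-- estimate of I₁ in the converse Titchmarsh theorem. If ω is a
k-th order modulus of continuity on [0,δ₀] with k ∈ (0,2] lying in the Zygmund
class 𝒵_k, then I₁(t) = C₄ t⁴ ∫_t^{δ₀} ω(λ)²/λ⁵ dλ + C₆ t⁴ ≤ C₉ ω(t)². -/
theorem I1_estimate
    (δ₀ k : ℝ) (hδ₀ : 0 < δ₀) (hk : 0 < k) (hk2 : k ≤ 2)
    (ω : ℝ → ℝ)
    (hcont : ContinuousOn ω (Icc 0 δ₀))
    (hnonneg : ∀ t ∈ Icc (0:ℝ) δ₀, 0 ≤ ω t)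
    (hzero : ω 0 = 0)
    (hpos : ∀ t ∈ Ioc (0:ℝ) δ₀, 0 < ω t)
    (hai : ∃ C : ℝ, 1 ≤ C ∧ ∀ t ∈ Icc (0:ℝ) δ₀, ∀ s ∈ Icc (0:ℝ) δ₀,
      t ≤ s → ω t ≤ C * ω s)
    (had : ∃ C : ℝ, 1 ≤ C ∧ ∀ t ∈ Ioc (0:ℝ) δ₀, ∀ s ∈ Ioc (0:ℝ) δ₀,
      s ≤ t → ω t / t ^ k ≤ C * (ω s / s ^ k))
    (CZ : ℝ) (hCZ : 0 < CZ)
    (hZk : ∀ t ∈ Ioc (0:ℝ) δ₀,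
      ∫ s in Ioc t δ₀, ω s / s ^ (1 + k) ≤ CZ * (ω t / t ^ k))
    (C₄ C₆ : ℝ) (hC₄ : 0 ≤ C₄) (hC₆ : 0 ≤ C₆) :
    ∃ C₉ : ℝ, 0 < C₉ ∧ ∀ t ∈ Ioc (0:ℝ) δ₀,
      C₄ * t ^ (4:ℝ) * (∫ l in Ioc t δ₀, ω l ^ 2 / l ^ (5:ℝ))
        + C₆ * t ^ (4:ℝ) ≤ C₉ * ω t ^ 2 := by
  obtain ⟨Cad, hCad1, hCad⟩ := had
  have hCad0 : 0 < Cad := lt_of_lt_of_le one_pos hCad1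
  have hωδ : 0 < ω δ₀ := hpos δ₀ ⟨hδ₀, le_refl _⟩
  set A : ℝ := Cad * δ₀ ^ k / ω δ₀ with hA
  have hA0 : 0 < A := by positivity
  set B : ℝ := A ^ 2 * δ₀ ^ (4 - 2 * k) with hB
  have hB0 : 0 < B := by positivity
  refine ⟨C₄ * (Cad * CZ) + C₆ * B + 1, by positivity, ?_⟩
  intro t ht
  obtain ⟨ht0, htδ⟩ := ht
  have hωt : 0 < ω t := hpos t ⟨ht0, htδ⟩
  have htk0 : (0:ℝ) < t ^ k := Real.rpow_pos_of_pos ht0 k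
  -- t^k ≤ A * ω t
  have htk : t ^ k ≤ A * ω t := by
    have h := hCad δ₀ ⟨hδ₀, le_refl _⟩ t ⟨ht0, htδ⟩ htδ
    rw [div_le_iff₀ (Real.rpow_pos_of_pos hδ₀ k)] at h
    rw [hA, div_mul_eq_mul_div, le_div_iff₀ hωδ]
    calc t ^ k * ω δ₀ ≤ t ^ k * (Cad * (ω t / t ^ k) * δ₀ ^ k) :=
          mul_le_mul_of_nonneg_left h htk0.le
      _ = Cad * δ₀ ^ k * ω t := by field_simp
  -- t^4 ≤ B * ω t ^ 2
  have ht4 : t ^ (4:ℝ) ≤ B * ω t ^ 2 := by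
    have h1 : t ^ (4:ℝ) = (t ^ k) ^ 2 * t ^ (4 - 2 * k) := by
      rw [← Real.rpow_natCast (t ^ k) 2, ← Real.rpow_mul ht0.le, ← Real.rpow_add ht0]
      congr 1; ring
    have h2 : (t ^ k) ^ 2 ≤ (A * ω t) ^ 2 := pow_le_pow_left₀ htk0.le htk 2
    have h3 : t ^ (4 - 2 * k) ≤ δ₀ ^ (4 - 2 * k) :=
      Real.rpow_le_rpow ht0.le htδ (by linarith)
    calc t ^ (4:ℝ) = (t ^ k) ^ 2 * t ^ (4 - 2 * k) := h1
      _ ≤ (A * ω t) ^ 2 * δ₀ ^ (4 - 2 * k) :=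
          mul_le_mul h2 h3 (Real.rpow_pos_of_pos ht0 _).le (by positivity)
      _ = B * ω t ^ 2 := by rw [hB]; ring
  -- integrability
  have hsub : Icc t δ₀ ⊆ Icc 0 δ₀ := Icc_subset_Icc ht0.le le_rfl
  have hωc : ContinuousOn ω (Icc t δ₀) := hcont.mono hsub
  have hne : ∀ l ∈ Icc t δ₀, l ≠ 0 := fun l hl => (lt_of_lt_of_le ht0 hl.1).ne'
  have hf_int : IntegrableOn (fun l => ω l ^ 2 / l ^ (5:ℝ)) (Ioc t δ₀) := by
    apply (ContinuousOn.integrableOn_compact isCompact_Icc ?_).mono_set Ioc_subset_Icc_self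
    exact (hωc.pow 2).div (continuousOn_id.rpow_const (fun l hl => Or.inl (hne l hl)))
      (fun l hl => (Real.rpow_pos_of_pos (lt_of_lt_of_le ht0 hl.1) _).ne')
  have hg_int : IntegrableOn (fun l => ω l / l ^ (1 + k)) (Ioc t δ₀) := by
    apply (ContinuousOn.integrableOn_compact isCompact_Icc ?_).mono_set Ioc_subset_Icc_self
    exact hωc.div (continuousOn_id.rpow_const (fun l hl => Or.inl (hne l hl)))
      (fun l hl => (Real.rpow_pos_of_pos (lt_of_lt_of_le ht0 hl.1) _).ne')
  have ht4k : (0:ℝ) < t ^ (4 - k) := Real.rpow_pos_of_pos ht0 _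
  -- pointwise bound
  have hpt : ∀ l ∈ Ioc t δ₀,
      ω l ^ 2 / l ^ (5:ℝ) ≤ Cad * (ω t / t ^ (4 - k)) * (ω l / l ^ (1 + k)) := by
    intro l hl
    have hl0 : 0 < l := lt_trans ht0 hl.1
    have hωl : 0 ≤ ω l := hnonneg l ⟨hl0.le, hl.2⟩
    have hlk0 : (0:ℝ) < l ^ k := Real.rpow_pos_of_pos hl0 k
    have hl4k : (0:ℝ) < l ^ (4 - k) := Real.rpow_pos_of_pos hl0 _
    have h' : ω l * t ^ k ≤ Cad * ω t * l ^ k := by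
      have h := hCad l ⟨hl0, hl.2⟩ t ⟨ht0, htδ⟩ hl.1.le
      rw [div_le_iff₀ hlk0] at h
      calc ω l * t ^ k ≤ Cad * (ω t / t ^ k) * l ^ k * t ^ k :=
            mul_le_mul_of_nonneg_right h htk0.le
        _ = Cad * ω t * l ^ k := by field_simp
    have hle : t ^ (4 - 2 * k) ≤ l ^ (4 - 2 * k) :=
      Real.rpow_le_rpow ht0.le hl.1.le (by linarith)
    have e1 : t ^ (4 - k) = t ^ k * t ^ (4 - 2 * k) := by
      rw [← Real.rpow_add ht0]; congr 1; ring
    have e2 : l ^ (4 - k) = l ^ k * l ^ (4 - 2 * k) := by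
      rw [← Real.rpow_add hl0]; congr 1; ring
    have key : ω l * t ^ (4 - k) ≤ Cad * ω t * l ^ (4 - k) := by
      rw [e1, e2]
      calc ω l * (t ^ k * t ^ (4 - 2 * k)) = ω l * t ^ k * t ^ (4 - 2 * k) := by ring
        _ ≤ Cad * ω t * l ^ k * l ^ (4 - 2 * k) :=
            mul_le_mul h' hle (Real.rpow_pos_of_pos ht0 _).le (by positivity)
        _ = Cad * ω t * (l ^ k * l ^ (4 - 2 * k)) := by ring
    have hd : ω l / l ^ (4 - k) ≤ Cad * (ω t / t ^ (4 - k)) := by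
      rw [← mul_div_assoc, div_le_div_iff₀ hl4k ht4k]; exact key
    calc ω l ^ 2 / l ^ (5:ℝ) = (ω l / l ^ (4 - k)) * (ω l / l ^ (1 + k)) := by
          rw [div_mul_div_comm, ← Real.rpow_add hl0]
          norm_num [sq]
      _ ≤ Cad * (ω t / t ^ (4 - k)) * (ω l / l ^ (1 + k)) :=
          mul_le_mul_of_nonneg_right hd (by positivity)
  -- integral estimate
  have hint : (∫ l in Ioc t δ₀, ω l ^ 2 / l ^ (5:ℝ)) ≤
      Cad * (ω t / t ^ (4 - k)) * (CZ * (ω t / t ^ k)) := by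
    have h1 : (∫ l in Ioc t δ₀, ω l ^ 2 / l ^ (5:ℝ)) ≤
        ∫ l in Ioc t δ₀, Cad * (ω t / t ^ (4 - k)) * (ω l / l ^ (1 + k)) := by
      apply setIntegral_mono_on hf_int (hg_int.const_mul _) measurableSet_Ioc hpt
    have h2 : (∫ l in Ioc t δ₀, Cad * (ω t / t ^ (4 - k)) * (ω l / l ^ (1 + k)))
        = Cad * (ω t / t ^ (4 - k)) * ∫ l in Ioc t δ₀, ω l / l ^ (1 + k) := by
      exact integral_const_mul _ _
    have h3 := hZk t ⟨ht0, htδ⟩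
    have hc0 : 0 ≤ Cad * (ω t / t ^ (4 - k)) := by positivity
    calc (∫ l in Ioc t δ₀, ω l ^ 2 / l ^ (5:ℝ)) ≤ _ := h1
      _ = Cad * (ω t / t ^ (4 - k)) * ∫ l in Ioc t δ₀, ω l / l ^ (1 + k) := h2
      _ ≤ Cad * (ω t / t ^ (4 - k)) * (CZ * (ω t / t ^ k)) :=
          mul_le_mul_of_nonneg_left h3 hc0
  have hfinal : t ^ (4:ℝ) * (∫ l in Ioc t δ₀, ω l ^ 2 / l ^ (5:ℝ)) ≤
      Cad * CZ * ω t ^ 2 := by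
    have e : t ^ (4:ℝ) * (Cad * (ω t / t ^ (4 - k)) * (CZ * (ω t / t ^ k)))
        = Cad * CZ * ω t ^ 2 := by
      have e3 : t ^ (4:ℝ) = t ^ (4 - k) * t ^ k := by
        rw [← Real.rpow_add ht0]; congr 1; ring
      rw [e3]; field_simp
    calc t ^ (4:ℝ) * (∫ l in Ioc t δ₀, ω l ^ 2 / l ^ (5:ℝ))
        ≤ t ^ (4:ℝ) * (Cad * (ω t / t ^ (4 - k)) * (CZ * (ω t / t ^ k))) :=
          mul_le_mul_of_nonneg_left hint (Real.rpow_pos_of_pos ht0 _).le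
      _ = Cad * CZ * ω t ^ 2 := e
  have hterm1 : C₄ * t ^ (4:ℝ) * (∫ l in Ioc t δ₀, ω l ^ 2 / l ^ (5:ℝ))
      ≤ C₄ * (Cad * CZ) * ω t ^ 2 := by
    rw [mul_assoc, mul_assoc]
    exact mul_le_mul_of_nonneg_left (by rw [← mul_assoc] at *; linarith [hfinal]) hC₄
  have hterm2 : C₆ * t ^ (4:ℝ) ≤ C₆ * B * ω t ^ 2 := by
    rw [mul_assoc]
    exact mul_le_mul_of_nonneg_left ht4 hC₆
  nlinarith [sq_nonneg (ω t), hterm1, hterm2]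
end

section
/- (Two-sided Titchmarsh for the classical log-modulus, abstract form.) Let d ≥ 2, α ∈ (0,2), γ ∈ ℝ. Let g : ℝ₊ → [0,∞) be integrable, and let N(t) = (∫_0^∞ |1−φ(λ t)|² g(λ) w(λ) dλ)^{1/2} where w(λ) ≍ λ^{d−1} for λ > 1, w(λ) ≍ λ² for λ ≤ 1, and φ : ℝ₊ → ℝ satisfies |φ| ≤ 1, |1−φ(u)| ≤ C u² (here u = λt with the eigenvalue bound 4λ²+Q²/4 absorbed), and |1−φ(u)| ≥ c > 0 for u ≥ 1. Then N(t) ≤ C₁ t^α(log(1/t))^γ for small t if and only if ∫_{1/t}^∞ g(λ) dλ ≤ C₂ t^{2α+d−1}(log(1/t))^{2γ} for small t. -/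
open Set MeasureTheory ENNReal

section TitchmarshHelpers

open Filter

lemma polybeatslog (β q : ℝ) (hβ : 0 < β) :
    ∃ t' : ℝ, 0 < t' ∧ t' < 1 ∧ ∀ t : ℝ, 0 < t → t < t' →
      t ^ β ≤ Real.log (1/t) ^ q := by
  have hlo : (fun x : ℝ => Real.log x ^ (-q)) =o[atTop] fun x : ℝ => x ^ β :=
    isLittleO_log_rpow_rpow_atTop (-q) hβ
  have hb := hlo.bound one_pos
  obtain ⟨x₀, hx₀⟩ := hb.exists_forall_of_atTop
  refine ⟨min (1/2) (1/(max x₀ 2)), ?_, ?_, ?_⟩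
  · have : (0:ℝ) < max x₀ 2 := lt_of_lt_of_le two_pos (le_max_right _ _)
    positivity
  · exact lt_of_le_of_lt (min_le_left _ _) (by norm_num)
  · intro t ht htl
    have hx2 : (0:ℝ) < max x₀ 2 := lt_of_lt_of_le two_pos (le_max_right _ _)
    have h1t : max x₀ 2 < 1/t := by
      rw [lt_div_iff₀ ht]
      have : t < 1/(max x₀ 2) := lt_of_lt_of_le htl (min_le_right _ _)
      calc max x₀ 2 * t < max x₀ 2 * (1/(max x₀ 2)) := by
            exact mul_lt_mul_of_pos_left this hx2
        _ = 1 := by field_simp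
    have hL1 : (1:ℝ) < 1/t := lt_trans (by exact lt_of_lt_of_le one_lt_two (le_max_right _ _)) h1t
    have hLpos : 0 < Real.log (1/t) := Real.log_pos hL1
    have hkey := hx₀ (1/t) (le_of_lt (lt_of_le_of_lt (le_max_left _ _) h1t))
    simp only [Real.norm_eq_abs, one_mul] at hkey
    rw [abs_of_nonneg (Real.rpow_nonneg hLpos.le _),
        abs_of_nonneg (Real.rpow_nonneg (by positivity) _)] at hkey
    have e1 : (1/t) ^ β = (t ^ β)⁻¹ := by rw [one_div, Real.inv_rpow ht.le]
    rw [e1, Real.rpow_neg hLpos.le] at hkey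
    have htβ : 0 < t ^ β := Real.rpow_pos_of_pos ht β
    have hLq : 0 < Real.log (1/t) ^ q := Real.rpow_pos_of_pos hLpos q
    exact ((inv_le_inv₀ hLq htβ).mp hkey)

lemma geom_poly_bound (p r : ℝ) (hr0 : 0 < r) (hr1 : r < 1) :
    ∃ M : ℝ, 0 < M ∧ ∀ k : ℕ, ((k:ℝ)+1) ^ p * r ^ k ≤ M := by
  rcases le_or_gt p 0 with hp | hp
  · refine ⟨1, one_pos, fun k => ?_⟩
    have h1 : ((k:ℝ)+1) ^ p ≤ 1 :=
      Real.rpow_le_one_of_one_le_of_nonpos (by push_cast; linarith [Nat.cast_nonneg (α := ℝ) k]) hp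
    have h2 : r ^ k ≤ 1 := pow_le_one₀ hr0.le hr1.le
    calc ((k:ℝ)+1) ^ p * r ^ k ≤ 1 * 1 :=
        mul_le_mul h1 h2 (by positivity) zero_le_one
      _ = 1 := by ring
  · set n : ℕ := ⌈p⌉₊ with hn
    have hpn : p ≤ (n:ℝ) := Nat.le_ceil p
    have hsum : Summable (fun k : ℕ => ((k:ℝ)) ^ n * r ^ k) :=
      summable_pow_mul_geometric_of_norm_lt_one n
        (by rwa [Real.norm_eq_abs, abs_of_pos hr0])
    have htend0 := hsum.tendsto_atTop_zero
    have htend : Tendsto (fun k : ℕ => ((k:ℝ)+1) ^ n * r ^ k) atTop (nhds 0) := by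
      have h2 : Tendsto (fun k : ℕ => (((k+1:ℕ)):ℝ) ^ n * r ^ (k+1)) atTop (nhds 0) :=
        htend0.comp (tendsto_add_atTop_nat 1)
      have h3 := h2.const_mul (r⁻¹)
      rw [mul_zero] at h3
      refine h3.congr fun k => ?_
      push_cast
      field_simp
      ring
    obtain ⟨M, hM⟩ := htend.bddAbove_range
    refine ⟨max M 1, lt_of_lt_of_le one_pos (le_max_right _ _), fun k => ?_⟩
    have h1 : ((k:ℝ)+1) ^ p ≤ ((k:ℝ)+1) ^ (n:ℝ) :=
      Real.rpow_le_rpow_of_exponent_le (by push_cast; linarith [Nat.cast_nonneg (α := ℝ) k]) hpn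
    rw [Real.rpow_natCast] at h1
    calc ((k:ℝ)+1) ^ p * r ^ k ≤ ((k:ℝ)+1) ^ n * r ^ k :=
        mul_le_mul_of_nonneg_right h1 (by positivity)
      _ ≤ M := hM ⟨k, rfl⟩
      _ ≤ max M 1 := le_max_left _ _

lemma dyadic_up (B : ℝ) (hB : 0 < B) :
    Ioi B ⊆ ⋃ k : ℕ, Ioc ((2:ℝ)^k * B) ((2:ℝ)^(k+1) * B) := by
  classical
  intro x hx
  have hxB : B < x := hx
  have hex : ∃ k : ℕ, x ≤ (2:ℝ)^(k+1) * B := by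
    obtain ⟨k, hk⟩ := pow_unbounded_of_one_lt (x / B) (one_lt_two (α := ℝ))
    refine ⟨k, ?_⟩
    rw [div_lt_iff₀ hB] at hk
    have : (2:ℝ)^(k+1) = 2 * 2^k := by ring
    nlinarith [pow_pos (two_pos (α := ℝ)) k]
  set k := Nat.find hex with hkdef
  have hk := Nat.find_spec hex
  refine mem_iUnion.mpr ⟨k, ?_, hk⟩
  rcases Nat.eq_zero_or_pos k with h0 | hpos
  · rw [h0]; simpa using hxB
  · have hmin := Nat.find_min hex (m := k - 1) (by omega)
    push_neg at hmin
    have : k - 1 + 1 = k := by omega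
    rwa [this] at hmin

lemma dyadic_down (B : ℝ) (hB : 0 < B) :
    Ioc (0:ℝ) B ⊆ ⋃ k : ℕ, Ioc (B / 2^(k+1)) (B / 2^k) := by
  classical
  intro x hx
  obtain ⟨hx0, hxB⟩ := hx
  have hex : ∃ k : ℕ, B / 2^(k+1) < x := by
    obtain ⟨k, hk⟩ := pow_unbounded_of_one_lt (B / x) (one_lt_two (α := ℝ))
    refine ⟨k, ?_⟩
    rw [div_lt_iff₀ hx0] at hk
    rw [div_lt_iff₀ (by positivity)]
    have : (2:ℝ)^(k+1) = 2 * 2^k := by ring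
    nlinarith [pow_pos (two_pos (α := ℝ)) k]
  set k := Nat.find hex with hkdef
  have hk := Nat.find_spec hex
  refine mem_iUnion.mpr ⟨k, hk, ?_⟩
  rcases Nat.eq_zero_or_pos k with h0 | hpos
  · rw [h0]; simpa using hxB
  · have hmin := Nat.find_min hex (m := k - 1) (by omega)
    push_neg at hmin
    have h1 : k - 1 + 1 = k := by omega
    rwa [h1] at hmin

lemma tsum_geom_ofReal (A r : ℝ) (hA : 0 ≤ A) (hr0 : 0 ≤ r) (hr1 : r < 1) :
    ∑' k : ℕ, ENNReal.ofReal (A * r ^ k) ≤ ENNReal.ofReal (A * (1 - r)⁻¹) := by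
  have h1 : ∀ k : ℕ, ENNReal.ofReal (A * r ^ k)
      = ENNReal.ofReal A * (ENNReal.ofReal r) ^ k := by
    intro k
    rw [ENNReal.ofReal_mul hA, ← ENNReal.ofReal_pow hr0]
  simp only [h1]
  rw [ENNReal.tsum_mul_left, ENNReal.tsum_geometric]
  rw [← ENNReal.ofReal_one, ← ENNReal.ofReal_sub _ hr0,
    ← ENNReal.ofReal_inv_of_pos (by linarith), ← ENNReal.ofReal_mul hA]

lemma tailpow (t d α : ℝ) (ht : 0 < t) (k : ℕ) :
    ((2:ℝ)^(k+1) * (1/t))^(d-1) * (t/2^k)^(2*α+d-1)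
      = (2:ℝ)^(d-1) * ((2:ℝ)^(-(2*α)))^k * t^(2*α) := by
  have ht' : t ≠ 0 := ne_of_gt ht
  have hb : (0:ℝ) < (2:ℝ)^(k+1) * (1/t) := by positivity
  have hc : (0:ℝ) < t/2^k := by positivity
  rw [Real.rpow_def_of_pos hb, Real.rpow_def_of_pos hc,
      Real.rpow_def_of_pos two_pos (d-1), Real.rpow_def_of_pos two_pos (-(2*α)),
      Real.rpow_def_of_pos ht (2*α),
      Real.log_mul (by positivity) (by positivity), Real.log_pow,
      Real.log_div ht' (by positivity), Real.log_pow, one_div, Real.log_inv,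
      ← Real.exp_nat_mul, ← Real.exp_add, ← Real.exp_add, ← Real.exp_add]
  congr 1
  push_cast
  ring

lemma midpow (t d α : ℝ) (ht : 0 < t) (k : ℕ) :
    ((1:ℝ)/2^k)^(4:ℕ) * ((1/t)/2^k)^(d-1) * ((2:ℝ)^(k+1)*t)^(2*α+d-1)
      = (2:ℝ)^(2*α+d-1) * ((2:ℝ)^(2*α-4))^k * t^(2*α) := by
  have ht' : t ≠ 0 := ne_of_gt ht
  have hb : (0:ℝ) < (1/t)/2^k := by positivity
  have hc : (0:ℝ) < (2:ℝ)^(k+1)*t := by positivity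
  have e4 : ((1:ℝ)/2^k)^(4:ℕ) = Real.exp ((-(4*k)) * Real.log 2) := by
    rw [← Real.exp_log (show (0:ℝ) < ((1:ℝ)/2^k)^(4:ℕ) by positivity),
        Real.log_pow, one_div, Real.log_inv, Real.log_pow]
    congr 1
    push_cast
    ring
  rw [e4, Real.rpow_def_of_pos hb, Real.rpow_def_of_pos hc,
      Real.rpow_def_of_pos two_pos (2*α+d-1), Real.rpow_def_of_pos two_pos (2*α-4),
      Real.rpow_def_of_pos ht (2*α),
      Real.log_div (by positivity) (by positivity), one_div, Real.log_inv, Real.log_pow,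
      Real.log_mul (by positivity) ht', Real.log_pow,
      ← Real.exp_nat_mul, ← Real.exp_add, ← Real.exp_add, ← Real.exp_add, ← Real.exp_add]
  congr 1
  push_cast
  ring

lemma logup (α γ : ℝ) (hα : 0 < α) :
    ∃ M : ℝ, 0 < M ∧ ∀ L : ℝ, 1 ≤ L → ∀ k : ℕ,
      (L + k * Real.log 2) ^ (2*γ) ≤ M * ((2:ℝ)^α)^k * L^(2*γ) := by
  have h2α1 : (1:ℝ) ≤ (2:ℝ)^α := Real.one_le_rpow one_le_two hα.le
  have hlog2pos : 0 < Real.log 2 := Real.log_pos one_lt_two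
  rcases le_or_gt γ 0 with hγ | hγ
  · refine ⟨1, one_pos, fun L hL k => ?_⟩
    have hLpos : (0:ℝ) < L := lt_of_lt_of_le one_pos hL
    have h1 : (L + k * Real.log 2) ^ (2*γ) ≤ L ^ (2*γ) :=
      Real.rpow_le_rpow_of_nonpos hLpos
        (le_add_of_nonneg_right (mul_nonneg (Nat.cast_nonneg k) hlog2pos.le)) (by linarith)
    have h2 : (1:ℝ) ≤ ((2:ℝ)^α)^k := one_le_pow₀ h2α1
    calc (L + k * Real.log 2) ^ (2*γ) ≤ L ^ (2*γ) := h1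
      _ ≤ ((2:ℝ)^α)^k * L^(2*γ) :=
          le_mul_of_one_le_left (Real.rpow_nonneg hLpos.le _) h2
      _ = 1 * ((2:ℝ)^α)^k * L^(2*γ) := by ring
  · obtain ⟨M₁, hM₁pos, hM₁⟩ := geom_poly_bound (2*γ) ((2:ℝ)^(-α))
      (Real.rpow_pos_of_pos two_pos _) (Real.rpow_lt_one_of_one_lt_of_neg one_lt_two (by linarith))
    refine ⟨M₁, hM₁pos, fun L hL k => ?_⟩
    have hLpos : (0:ℝ) < L := lt_of_lt_of_le one_pos hL
    have hlog2 : Real.log 2 ≤ 1 := by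
      have := Real.log_le_sub_one_of_pos (two_pos (α := ℝ)); linarith
    have hstep1 : L + k * Real.log 2 ≤ L * ((k:ℝ)+1) := by
      have : (k:ℝ) * Real.log 2 ≤ (k:ℝ) * L :=
        mul_le_mul_of_nonneg_left (hlog2.trans hL) (Nat.cast_nonneg k)
      nlinarith
    have hstep2 : (L + k * Real.log 2) ^ (2*γ) ≤ (L * ((k:ℝ)+1)) ^ (2*γ) :=
      Real.rpow_le_rpow (by positivity) hstep1 (by linarith)
    have hstep3 : (L * ((k:ℝ)+1)) ^ (2*γ) = L^(2*γ) * ((k:ℝ)+1)^(2*γ) :=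
      Real.mul_rpow hLpos.le (by positivity)
    have hstep4 : ((k:ℝ)+1)^(2*γ) ≤ M₁ * ((2:ℝ)^α)^k := by
      have h := hM₁ k
      have hprod : ((2:ℝ)^(-α))^k * ((2:ℝ)^α)^k = 1 := by
        rw [← mul_pow, ← Real.rpow_add two_pos]
        simp
      have hk : (0:ℝ) < ((2:ℝ)^α)^k := by positivity
      have h2 := mul_le_mul_of_nonneg_right h hk.le
      rw [mul_assoc, hprod, mul_one] at h2
      exact h2
    calc (L + k * Real.log 2) ^ (2*γ) ≤ L^(2*γ) * ((k:ℝ)+1)^(2*γ) :=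
          hstep2.trans_eq hstep3
      _ ≤ L^(2*γ) * (M₁ * ((2:ℝ)^α)^k) :=
          mul_le_mul_of_nonneg_left hstep4 (Real.rpow_nonneg hLpos.le _)
      _ = M₁ * ((2:ℝ)^α)^k * L^(2*γ) := by ring

lemma logdown (α γ : ℝ) (hα : 0 < α) (hα2 : α < 2) (ℓ₁ : ℝ) (hℓ₁ : 0 < ℓ₁) :
    ∃ M : ℝ, 0 < M ∧ ∃ t' : ℝ, 0 < t' ∧ t' < 1 ∧ ∀ t : ℝ, 0 < t → t < t' → ∀ k : ℕ,
      ℓ₁ ≤ Real.log (1/t) - ((k:ℝ)+1) * Real.log 2 →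
      ((2:ℝ)^(2*α-4))^k * (Real.log (1/t) - ((k:ℝ)+1) * Real.log 2) ^ (2*γ)
        ≤ M * ((2:ℝ)^(α-2))^k * Real.log (1/t) ^ (2*γ) := by
  have hrpos : (0:ℝ) < (2:ℝ)^(α-2) := Real.rpow_pos_of_pos two_pos _
  set r : ℝ := (2:ℝ)^(α-2) with hrdef
  have hr1 : r < 1 := Real.rpow_lt_one_of_one_lt_of_neg one_lt_two (by linarith)
  have hq : ((2:ℝ)^(2*α-4)) = r * r := by
    rw [hrdef, ← Real.rpow_add two_pos]; ring_nf
  have hqr : ∀ k : ℕ, ((2:ℝ)^(2*α-4))^k ≤ r^k := fun k => by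
    apply pow_le_pow_left₀ (by positivity)
    rw [hq]; nlinarith
  have hlog2pos : 0 < Real.log 2 := Real.log_pos one_lt_two
  rcases le_or_gt 0 γ with hγ | hγ
  · refine ⟨1, one_pos, 1/2, by norm_num, by norm_num, fun t ht htl k hx => ?_⟩
    set L := Real.log (1/t) with hLdef
    set x := L - ((k:ℝ)+1) * Real.log 2 with hxdef
    have hxpos : 0 < x := lt_of_lt_of_le hℓ₁ hx
    have hxL : x ≤ L := by
      have : 0 ≤ ((k:ℝ)+1) * Real.log 2 := by positivity
      simp only [hxdef]; linarith
    have hLpos : 0 < L := lt_of_lt_of_le hxpos hxL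
    have h1 : x ^ (2*γ) ≤ L ^ (2*γ) := Real.rpow_le_rpow hxpos.le hxL (by linarith)
    calc ((2:ℝ)^(2*α-4))^k * x ^ (2*γ) ≤ r^k * L^(2*γ) :=
          mul_le_mul (hqr k) h1 (Real.rpow_nonneg hxpos.le _) (by positivity)
      _ = 1 * r^k * L^(2*γ) := by ring
  · obtain ⟨t'', ht''0, ht''1, hpb⟩ := polybeatslog ((2-α)/2) (2*γ) (by linarith)
    refine ⟨max ((2:ℝ)^(-(2*γ))) (ℓ₁^(2*γ) * r⁻¹),
      lt_max_of_lt_left (Real.rpow_pos_of_pos two_pos _), t'', ht''0, ht''1,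
      fun t ht htl k hx => ?_⟩
    set L := Real.log (1/t) with hLdef
    set x := L - ((k:ℝ)+1) * Real.log 2 with hxdef
    have hxpos : 0 < x := lt_of_lt_of_le hℓ₁ hx
    have hk1 : (0:ℝ) ≤ ((k:ℝ)+1) * Real.log 2 := by positivity
    have hLpos : 0 < L := by
      have : x ≤ L := by simp only [hxdef]; linarith
      exact lt_of_lt_of_le hxpos this
    have hrk : (0:ℝ) < r^k := by positivity
    rcases le_or_gt (((k:ℝ)+1) * Real.log 2) (L/2) with hcase | hcase
    · have hxL2 : L/2 ≤ x := by simp only [hxdef]; linarith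
      have h1 : x ^ (2*γ) ≤ (L/2) ^ (2*γ) :=
        Real.rpow_le_rpow_of_nonpos (by linarith) hxL2 (by linarith)
      have h2 : (L/2) ^ (2*γ) = (2:ℝ)^(-(2*γ)) * L^(2*γ) := by
        rw [Real.div_rpow hLpos.le (by norm_num : (0:ℝ) ≤ 2),
            Real.rpow_neg (by norm_num : (0:ℝ) ≤ 2)]
        ring
      calc ((2:ℝ)^(2*α-4))^k * x ^ (2*γ)
          ≤ r^k * ((2:ℝ)^(-(2*γ)) * L^(2*γ)) :=
            mul_le_mul (hqr k) (h1.trans_eq h2) (Real.rpow_nonneg hxpos.le _) hrk.le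
        _ = (2:ℝ)^(-(2*γ)) * r^k * L^(2*γ) := by ring
        _ ≤ max ((2:ℝ)^(-(2*γ))) (ℓ₁^(2*γ) * r⁻¹) * r^k * L^(2*γ) :=
            mul_le_mul_of_nonneg_right
              (mul_le_mul_of_nonneg_right (le_max_left _ _) hrk.le)
              (Real.rpow_nonneg hLpos.le _)
    · have h1 : x ^ (2*γ) ≤ ℓ₁ ^ (2*γ) :=
        Real.rpow_le_rpow_of_nonpos hℓ₁ hx (by linarith)
      have hkL : L/(2*Real.log 2) - 1 ≤ (k:ℝ) := by
        have hL2 : L < 2*((k:ℝ)+1)*Real.log 2 := by nlinarith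
        rw [sub_le_iff_le_add, div_le_iff₀ (by positivity)]
        nlinarith
      have h2 : (r:ℝ)^k ≤ r⁻¹ * t^((2-α)/2) := by
        have e1 : (r:ℝ)^k = r ^ ((k:ℝ)) := (Real.rpow_natCast r k).symm
        have e2 : r ^ ((k:ℝ)) ≤ r ^ (L/(2*Real.log 2) - 1) :=
          Real.rpow_le_rpow_of_exponent_ge hrpos hr1.le hkL
        have e3 : r ^ (L/(2*Real.log 2) - 1) = r⁻¹ * r ^ (L/(2*Real.log 2)) := by
          rw [Real.rpow_sub hrpos, Real.rpow_one]; ring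
        have e4 : r ^ (L/(2*Real.log 2)) = t^((2-α)/2) := by
          rw [hrdef, ← Real.rpow_mul (by norm_num : (0:ℝ) ≤ 2),
              Real.rpow_def_of_pos two_pos, Real.rpow_def_of_pos ht]
          congr 1
          rw [hLdef, one_div, Real.log_inv]
          field_simp
          ring
        rw [e1]; rw [e3, e4] at e2; exact e2
      have h3 : t^((2-α)/2) ≤ L^(2*γ) := hpb t ht htl
      have hq2 : ((2:ℝ)^(2*α-4))^k = r^k * r^k := by rw [hq, mul_pow]
      have ht2 : (0:ℝ) ≤ t^((2-α)/2) := Real.rpow_nonneg ht.le _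
      have hl2 : (0:ℝ) ≤ ℓ₁^(2*γ) := Real.rpow_nonneg hℓ₁.le _
      calc ((2:ℝ)^(2*α-4))^k * x ^ (2*γ)
          = (r^k * x ^ (2*γ)) * r^k := by rw [hq2]; ring
        _ ≤ (r^k * ℓ₁^(2*γ)) * (r⁻¹ * t^((2-α)/2)) := by
            apply mul_le_mul _ h2 hrk.le (by positivity)
            exact mul_le_mul_of_nonneg_left h1 hrk.le
        _ = (ℓ₁^(2*γ) * r⁻¹) * r^k * t^((2-α)/2) := by ring
        _ ≤ (ℓ₁^(2*γ) * r⁻¹) * r^k * L^(2*γ) := by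
            apply mul_le_mul_of_nonneg_left h3 (by positivity)
        _ ≤ max ((2:ℝ)^(-(2*γ))) (ℓ₁^(2*γ) * r⁻¹) * r^k * L^(2*γ) :=
            mul_le_mul_of_nonneg_right
              (mul_le_mul_of_nonneg_right (le_max_right _ _) hrk.le)
              (Real.rpow_nonneg hLpos.le _)

lemma piece_bound {F g : ℝ → ℝ} {s : Set ℝ} (hs : MeasurableSet s) {A R : ℝ} (hA : 0 ≤ A)
    (hpt : ∀ l ∈ s, F l ≤ A * g l)
    (htail : ∫⁻ l in s, ENNReal.ofReal (g l) ≤ ENNReal.ofReal R) :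
    ∫⁻ l in s, ENNReal.ofReal (F l) ≤ ENNReal.ofReal (A * R) := by
  calc ∫⁻ l in s, ENNReal.ofReal (F l)
      ≤ ∫⁻ l in s, ENNReal.ofReal (A * g l) :=
        lintegral_mono_ae ((ae_restrict_iff' hs).mpr (.of_forall fun l hl =>
          ENNReal.ofReal_le_ofReal (hpt l hl)))
    _ = ∫⁻ l in s, ENNReal.ofReal A * ENNReal.ofReal (g l) := by
        simp_rw [← ENNReal.ofReal_mul hA]
    _ = ENNReal.ofReal A * ∫⁻ l in s, ENNReal.ofReal (g l) :=
        lintegral_const_mul' _ _ ENNReal.ofReal_ne_top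
    _ ≤ ENNReal.ofReal A * ENNReal.ofReal R := mul_le_mul_right htail _
    _ = ENNReal.ofReal (A * R) := (ENNReal.ofReal_mul hA).symm

end TitchmarshHelpers

set_option maxHeartbeats 2000000 in
/-- abstract two-sided Titchmarsh theorem for the modulus
ω(t) = t^α (log(1/t))^γ. With w(λ) ≍ λ^{d−1} for λ > 1 and w(λ) ≍ λ² for
0 < λ ≤ 1, and a multiplier φ satisfying |φ| ≤ 1, |1 − φ(u)| ≤ Cφ u² and
|1 − φ(u)| ≥ cφ > 0 for u ≥ 1, the Plancherel quantity
N(t)² = ∫_0^∞ |1 − φ(λt)|² g(λ) w(λ) dλ satisfies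
N(t) ≤ C₁ t^α (log(1/t))^γ for small t iff
∫_{1/t}^∞ g ≤ C₂ t^{2α+d−1}(log(1/t))^{2γ} for small t. -/
theorem abstract_titchmarsh_iff
    (d α γ : ℝ) (hd : 2 ≤ d) (hα : 0 < α) (hα2 : α < 2)
    (g : ℝ → ℝ) (hg : Measurable g) (hgnonneg : ∀ l, 0 ≤ g l)
    (hgint : ∫⁻ l in Ioi (0:ℝ), ENNReal.ofReal (g l) < ⊤)
    (w : ℝ → ℝ) (hw : Measurable w)
    (c₁ c₂ : ℝ) (hc₁ : 0 < c₁) (hc₂ : 0 < c₂)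
    (hwhigh : ∀ l : ℝ, 1 < l →
      c₁ * l ^ (d-1) ≤ w l ∧ w l ≤ c₂ * l ^ (d-1))
    (hwlow : ∀ l : ℝ, 0 < l → l ≤ 1 →
      c₁ * l ^ 2 ≤ w l ∧ w l ≤ c₂ * l ^ 2)
    (φ : ℝ → ℝ)
    (hφbdd : ∀ u : ℝ, 0 ≤ u → |φ u| ≤ 1)
    (Cφ : ℝ) (hCφ : 0 < Cφ)
    (hφnear : ∀ u : ℝ, 0 ≤ u → |1 - φ u| ≤ Cφ * u ^ 2)
    (cφ : ℝ) (hcφ : 0 < cφ)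
    (hφfar : ∀ u : ℝ, 1 ≤ u → cφ ≤ |1 - φ u|) :
    (∃ C₁ : ℝ, 0 < C₁ ∧ ∃ t₀ : ℝ, 0 < t₀ ∧ t₀ < 1 ∧
        ∀ t : ℝ, 0 < t → t < t₀ →
          ∫⁻ l in Ioi (0:ℝ),
              ENNReal.ofReal ((1 - φ (l * t)) ^ 2 * (g l * w l))
            ≤ ENNReal.ofReal ((C₁ * (t ^ α * Real.log (1/t) ^ γ)) ^ 2))
      ↔
    (∃ C₂ : ℝ, 0 < C₂ ∧ ∃ t₁ : ℝ, 0 < t₁ ∧ t₁ < 1 ∧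
        ∀ t : ℝ, 0 < t → t < t₁ →
          ∫⁻ l in Ioi (1/t), ENNReal.ofReal (g l)
            ≤ ENNReal.ofReal
                (C₂ * t ^ (2*α + d - 1) * Real.log (1/t) ^ (2*γ))) := by
  constructor
  · rintro ⟨C₁, hC₁, t₀, ht₀, ht₀1, H⟩
    refine ⟨C₁^2 / (cφ^2 * c₁), by positivity, t₀, ht₀, ht₀1, fun t ht htl => ?_⟩
    have ht1 : t < 1 := lt_trans htl ht₀1
    have hBpos : 0 < 1/t := by positivity
    have hB1 : 1 < 1/t := by rw [lt_div_iff₀ ht]; linarith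
    set K : ℝ := t ^ (d-1) / (cφ^2 * c₁) with hK
    have hKpos : 0 < K := by
      have := Real.rpow_pos_of_pos ht (d-1); positivity
    -- pointwise bound on Ioi (1/t)
    have hpt : ∀ l ∈ Ioi (1/t), ENNReal.ofReal (g l)
        ≤ ENNReal.ofReal (K * ((1 - φ (l * t)) ^ 2 * (g l * w l))) := by
      intro l hl
      have hlB : 1/t < l := hl
      have hl1 : 1 < l := lt_trans hB1 hlB
      have hlpos : 0 < l := lt_trans one_pos hl1
      have hu : 1 ≤ l * t := (div_le_iff₀ ht).mp hlB.le
      have hfar := hφfar (l*t) hu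
      have hfar2 : cφ^2 ≤ (1 - φ (l*t))^2 := by
        have := sq_abs (1 - φ (l*t))
        nlinarith [abs_nonneg (1 - φ (l*t))]
      have hwl : c₁ * (1/t) ^ (d-1) ≤ w l := by
        refine le_trans ?_ (hwhigh l hl1).1
        have : (1/t) ^ (d-1) ≤ l ^ (d-1) :=
          Real.rpow_le_rpow hBpos.le hlB.le (by linarith)
        nlinarith [Real.rpow_pos_of_pos hBpos (d-1)]
      have hwpos : 0 < w l := lt_of_lt_of_le (by positivity) hwl
      apply ENNReal.ofReal_le_ofReal
      have hrw : (1/t) ^ (d-1) = (t ^ (d-1))⁻¹ := by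
        rw [one_div, Real.inv_rpow ht.le]
      have htd : 0 < t ^ (d-1) := Real.rpow_pos_of_pos ht _
      rw [hrw] at hwl
      have hchain : cφ^2 * (c₁ * (t^(d-1))⁻¹) * g l ≤ (1 - φ (l*t))^2 * (g l * w l) := by
        have h1 : cφ^2 * (c₁ * (t^(d-1))⁻¹) * g l ≤ cφ^2 * (w l) * g l := by
          have h := mul_le_mul_of_nonneg_left hwl (mul_nonneg (sq_nonneg cφ) (hgnonneg l))
          nlinarith [h]
        refine h1.trans ?_
        have h2 := mul_le_mul_of_nonneg_left hfar2 (mul_nonneg (hwpos.le) (hgnonneg l))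
        nlinarith [h2]
      have e : K * (cφ^2 * (c₁ * (t^(d-1))⁻¹) * g l) = g l := by
        rw [hK]; field_simp
      calc g l = K * (cφ^2 * (c₁ * (t^(d-1))⁻¹) * g l) := e.symm
        _ ≤ K * ((1 - φ (l*t))^2 * (g l * w l)) :=
            mul_le_mul_of_nonneg_left hchain hKpos.le
    calc ∫⁻ l in Ioi (1/t), ENNReal.ofReal (g l)
        ≤ ∫⁻ l in Ioi (1/t), ENNReal.ofReal (K * ((1 - φ (l * t)) ^ 2 * (g l * w l))) :=
          lintegral_mono_ae ((ae_restrict_iff' measurableSet_Ioi).mpr (Filter.Eventually.of_forall hpt))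
      _ = ∫⁻ l in Ioi (1/t), ENNReal.ofReal K * ENNReal.ofReal ((1 - φ (l * t)) ^ 2 * (g l * w l)) := by
          congr 1; ext l; rw [ENNReal.ofReal_mul hKpos.le]
      _ = ENNReal.ofReal K * ∫⁻ l in Ioi (1/t), ENNReal.ofReal ((1 - φ (l * t)) ^ 2 * (g l * w l)) :=
          lintegral_const_mul' _ _ ENNReal.ofReal_ne_top
      _ ≤ ENNReal.ofReal K * ∫⁻ l in Ioi (0:ℝ), ENNReal.ofReal ((1 - φ (l * t)) ^ 2 * (g l * w l)) := by
          gcongr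
      _ ≤ ENNReal.ofReal K * ENNReal.ofReal ((C₁ * (t ^ α * Real.log (1/t) ^ γ)) ^ 2) := by
          gcongr; exact H t ht htl
      _ = ENNReal.ofReal (K * (C₁ * (t ^ α * Real.log (1/t) ^ γ)) ^ 2) :=
          (ENNReal.ofReal_mul hKpos.le).symm
      _ = ENNReal.ofReal (C₁^2 / (cφ^2 * c₁) * t ^ (2*α + d - 1) * Real.log (1/t) ^ (2*γ)) := by
          congr 1
          have hLpos : 0 < Real.log (1/t) := Real.log_pos hB1
          have e1 : (t ^ α)^2 = t ^ (2*α) := by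
            rw [← Real.rpow_natCast (t ^ α) 2, ← Real.rpow_mul ht.le]
            norm_num; ring_nf
          have e2 : (Real.log (1/t) ^ γ)^2 = Real.log (1/t) ^ (2*γ) := by
            rw [← Real.rpow_natCast (Real.log (1/t) ^ γ) 2, ← Real.rpow_mul hLpos.le]
            norm_num; ring_nf
          have e3 : t ^ (d-1) * t ^ (2*α) = t ^ (2*α + d - 1) := by
            rw [← Real.rpow_add ht]; ring_nf
          calc K * (C₁ * (t ^ α * Real.log (1/t) ^ γ)) ^ 2
              = C₁^2 / (cφ^2*c₁) * (t^(d-1) * ((t^α)^2)) * ((Real.log (1/t) ^ γ)^2) := by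
                rw [hK]; ring
            _ = C₁^2 / (cφ^2*c₁) * t ^ (2*α + d - 1) * Real.log (1/t) ^ (2*γ) := by
                rw [e1, e2, e3]
  · rintro ⟨C₂, hC₂, t₁, ht₁0, ht₁1, H⟩
    have hd1 : (1:ℝ) ≤ d - 1 := by linarith
    -- fixed constants
    set Λ : ℝ := 2/t₁ with hΛdef
    have hΛpos : 0 < Λ := by positivity
    have hΛ2 : 2 ≤ Λ := by
      rw [hΛdef, le_div_iff₀ ht₁0]; nlinarith
    have hΛ1 : 1 ≤ Λ := by linarith
    have ht₁inv : 1 < 1/t₁ := by rw [lt_div_iff₀ ht₁0]; linarith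
    set ℓ₁ : ℝ := Real.log (1/t₁) with hℓ₁def
    have hℓ₁pos : 0 < ℓ₁ := Real.log_pos ht₁inv
    obtain ⟨Mu, hMu, hup⟩ := logup α γ hα
    obtain ⟨Md, hMd, td, htd0, htd1, hdown⟩ := logdown α γ hα hα2 ℓ₁ hℓ₁pos
    obtain ⟨tp, htp0, htp1, hpb4⟩ := polybeatslog (4 - 2*α) (2*γ) (by linarith)
    set G : ℝ := (∫⁻ l in Ioi (0:ℝ), ENNReal.ofReal (g l)).toReal with hGdef
    have hGnonneg : 0 ≤ G := ENNReal.toReal_nonneg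
    have hGeq : ∫⁻ l in Ioi (0:ℝ), ENNReal.ofReal (g l) = ENNReal.ofReal G := by
      rw [hGdef, ENNReal.ofReal_toReal hgint.ne]
    -- ratios
    have hrtpos : (0:ℝ) < (2:ℝ)^(-α) := Real.rpow_pos_of_pos two_pos _
    have hrt1 : (2:ℝ)^(-α) < 1 :=
      Real.rpow_lt_one_of_one_lt_of_neg one_lt_two (by linarith)
    have hrmpos : (0:ℝ) < (2:ℝ)^(α-2) := Real.rpow_pos_of_pos two_pos _
    have hrm1 : (2:ℝ)^(α-2) < 1 :=
      Real.rpow_lt_one_of_one_lt_of_neg one_lt_two (by linarith)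
    -- constants for the three pieces
    set Klow : ℝ := Cφ^2*Λ^4*(c₂*Λ^(d-1)) * G with hKlowdef
    set Kmid : ℝ := (Cφ^2*(c₂*C₂) * (2:ℝ)^(2*α+d-1) * Md) * (1 - (2:ℝ)^(α-2))⁻¹ with hKmiddef
    set Ktail : ℝ := (4*(c₂*C₂) * (2:ℝ)^(d-1) * Mu) * (1 - (2:ℝ)^(-α))⁻¹ with hKtaildef
    have hKlow0 : 0 ≤ Klow := by
      have := Real.rpow_nonneg hΛpos.le (d-1); positivity
    have hKmid0 : 0 ≤ Kmid := by
      have h1 := Real.rpow_nonneg (le_of_lt (two_pos (α := ℝ))) (2*α+d-1)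
      have h2 : 0 ≤ (1 - (2:ℝ)^(α-2))⁻¹ := by
        rw [inv_nonneg]; linarith
      positivity
    have hKtail0 : 0 ≤ Ktail := by
      have h1 := Real.rpow_nonneg (le_of_lt (two_pos (α := ℝ))) (d-1)
      have h2 : 0 ≤ (1 - (2:ℝ)^(-α))⁻¹ := by
        rw [inv_nonneg]; linarith
      positivity
    set Ksum : ℝ := Klow + Kmid + Ktail + 1 with hKsumdef
    have hKsum1 : 1 ≤ Ksum := by linarith
    have hKsumpos : 0 < Ksum := by linarith
    refine ⟨Real.sqrt Ksum, Real.sqrt_pos.mpr hKsumpos,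
      min (min (Real.exp (-1)) (t₁/2)) (min td tp), ?_, ?_, ?_⟩
    · have := Real.exp_pos (-1); positivity
    · calc min (min (Real.exp (-1)) (t₁/2)) (min td tp)
          ≤ min (Real.exp (-1)) (t₁/2) := min_le_left _ _
        _ ≤ Real.exp (-1) := min_le_left _ _
        _ < 1 := by
            rw [Real.exp_lt_one_iff]; norm_num
    intro t ht htl
    have htexp : t < Real.exp (-1) :=
      lt_of_lt_of_le htl ((min_le_left _ _).trans (min_le_left _ _))
    have htt₁2 : t < t₁/2 :=
      lt_of_lt_of_le htl ((min_le_left _ _).trans (min_le_right _ _))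
    have httd : t < td :=
      lt_of_lt_of_le htl ((min_le_right _ _).trans (min_le_left _ _))
    have http : t < tp :=
      lt_of_lt_of_le htl ((min_le_right _ _).trans (min_le_right _ _))
    have htt₁ : t < t₁ := by linarith
    have ht1 : t < 1 := lt_trans htexp (by rw [Real.exp_lt_one_iff]; norm_num)
    set B : ℝ := 1/t with hBdef
    have hBpos : 0 < B := by positivity
    have hB1 : 1 < B := by rw [hBdef, lt_div_iff₀ ht]; linarith
    set L : ℝ := Real.log (1/t) with hLdef
    have hLpos : 0 < L := Real.log_pos hB1
    have hL1 : 1 ≤ L := by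
      have h0 : Real.exp 1 * t < 1 := by
        have h := mul_lt_mul_of_pos_left htexp (Real.exp_pos 1)
        rwa [← Real.exp_add, show (1:ℝ) + -1 = 0 by ring, Real.exp_zero] at h
      have h1 : Real.exp 1 < 1/t := (lt_div_iff₀ ht).mpr h0
      calc (1:ℝ) = Real.log (Real.exp 1) := (Real.log_exp 1).symm
        _ ≤ L := Real.log_le_log (Real.exp_pos 1) h1.le
    have hBΛ : Λ < B := by
      rw [hΛdef, hBdef, div_lt_div_iff₀ ht₁0 ht]
      linarith
    set X : ℝ := t^(2*α) * L^(2*γ) with hXdef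
    have hXpos : 0 < X := by
      have := Real.rpow_pos_of_pos ht (2*α)
      have := Real.rpow_pos_of_pos hLpos (2*γ)
      positivity
    set F : ℝ → ℝ := fun l => (1 - φ (l * t)) ^ 2 * (g l * w l) with hFdef
    -- ====== LOW piece ======
    have hlow : ∫⁻ l in Ioc (0:ℝ) Λ, ENNReal.ofReal (F l)
        ≤ ENNReal.ofReal (Klow * X) := by
      have hpt : ∀ l ∈ Ioc (0:ℝ) Λ, F l ≤ (Cφ^2*Λ^4*(c₂*Λ^(d-1)) * t^(4:ℕ)) * g l := by
        intro l hl
        obtain ⟨hl0, hlΛ⟩ := hl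
        have hlt0 : 0 ≤ l * t := by positivity
        have hnear := hφnear (l*t) hlt0
        have hphi2 : (1 - φ (l*t))^2 ≤ Cφ^2 * (l*t)^(4:ℕ) := by
          have h := sq_abs (1 - φ (l*t))
          have h2 : |1 - φ (l*t)|^2 ≤ (Cφ * (l*t)^2)^2 :=
            pow_le_pow_left₀ (abs_nonneg _) hnear 2
          calc (1 - φ (l*t))^2 = |1 - φ (l*t)|^2 := h.symm
            _ ≤ (Cφ * (l*t)^2)^2 := h2
            _ = Cφ^2 * (l*t)^(4:ℕ) := by ring
        have hlt4 : (l*t)^(4:ℕ) ≤ Λ^4 * t^(4:ℕ) := by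
          have h1 : l*t ≤ Λ*t := mul_le_mul_of_nonneg_right hlΛ ht.le
          calc (l*t)^(4:ℕ) ≤ (Λ*t)^(4:ℕ) := pow_le_pow_left₀ (by positivity) h1 4
            _ = Λ^4 * t^(4:ℕ) := by ring
        have hΛd : (1:ℝ) ≤ Λ^(d-1) := Real.one_le_rpow hΛ1 (by linarith)
        have hwb : w l ≤ c₂ * Λ^(d-1) := by
          rcases le_or_gt l 1 with hl1' | hl1'
          · have h1 := (hwlow l hl0 hl1').2
            have h2 : l^2 ≤ 1 := pow_le_one₀ hl0.le hl1'
            calc w l ≤ c₂ * l^2 := h1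
              _ ≤ c₂ * 1 := mul_le_mul_of_nonneg_left h2 hc₂.le
              _ ≤ c₂ * Λ^(d-1) := mul_le_mul_of_nonneg_left hΛd hc₂.le
          · have h1 := (hwhigh l hl1').2
            have hmono : l^(d-1) ≤ Λ^(d-1) :=
              Real.rpow_le_rpow (by linarith) hlΛ (by linarith)
            calc w l ≤ c₂ * l^(d-1) := h1
              _ ≤ c₂ * Λ^(d-1) := mul_le_mul_of_nonneg_left hmono hc₂.le
        have hgw : 0 ≤ g l := hgnonneg l
        have hwpos : 0 ≤ w l := by
          rcases le_or_gt l 1 with hl1' | hl1'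
          · exact le_trans (by positivity) (hwlow l hl0 hl1').1
          · refine le_trans ?_ (hwhigh l hl1').1
            have := Real.rpow_nonneg (le_of_lt (lt_trans one_pos hl1')) (d-1)
            positivity
        calc F l = (1 - φ (l*t))^2 * (g l * w l) := rfl
          _ ≤ (Cφ^2 * (l*t)^(4:ℕ)) * (g l * w l) := by
              apply mul_le_mul_of_nonneg_right hphi2 (by positivity)
          _ ≤ (Cφ^2 * (Λ^4 * t^(4:ℕ))) * (g l * (c₂*Λ^(d-1))) := by
              apply mul_le_mul
              · exact mul_le_mul_of_nonneg_left hlt4 (by positivity)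
              · exact mul_le_mul_of_nonneg_left hwb hgw
              · positivity
              · positivity
          _ = (Cφ^2*Λ^4*(c₂*Λ^(d-1)) * t^(4:ℕ)) * g l := by ring
      have htail : ∫⁻ l in Ioc (0:ℝ) Λ, ENNReal.ofReal (g l) ≤ ENNReal.ofReal G := by
        rw [← hGeq]
        exact lintegral_mono_set Ioc_subset_Ioi_self
      have h1 := piece_bound measurableSet_Ioc
        (by positivity : (0:ℝ) ≤ Cφ^2*Λ^4*(c₂*Λ^(d-1)) * t^(4:ℕ)) hpt htail
      refine h1.trans (ENNReal.ofReal_le_ofReal ?_)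
      -- t^4 * G ≤ G * X  via t^4 ≤ X
      have ht4 : (t:ℝ)^(4:ℕ) ≤ X := by
        have e1 : (t:ℝ)^(4:ℕ) = t^((4:ℕ):ℝ) := (Real.rpow_natCast t 4).symm
        have e2 : t^((4:ℕ):ℝ) = t^(2*α) * t^(4-2*α) := by
          rw [← Real.rpow_add ht]; norm_num
        have h3 : t^(4-2*α) ≤ L^(2*γ) := hpb4 t ht http
        rw [e1, e2, hXdef]
        exact mul_le_mul_of_nonneg_left h3 (Real.rpow_nonneg ht.le _)
      calc Cφ^2*Λ^4*(c₂*Λ^(d-1)) * t^(4:ℕ) * G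
          ≤ Cφ^2*Λ^4*(c₂*Λ^(d-1)) * X * G := by
            apply mul_le_mul_of_nonneg_right _ hGnonneg
            apply mul_le_mul_of_nonneg_left ht4
            positivity
        _ = Klow * X := by rw [hKlowdef]; ring
    -- ====== TAIL piece ======
    set Atail : ℝ := 4*(c₂*C₂) * (2:ℝ)^(d-1) * Mu with hAtaildef
    have hAtail0 : 0 ≤ Atail := by
      have := Real.rpow_nonneg (le_of_lt (two_pos (α := ℝ))) (d-1)
      positivity
    have htailI : ∫⁻ l in Ioi B, ENNReal.ofReal (F l)
        ≤ ENNReal.ofReal (Ktail * X) := by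
      have hk_bound : ∀ k : ℕ, ∫⁻ l in Ioc ((2:ℝ)^k*B) ((2:ℝ)^(k+1)*B), ENNReal.ofReal (F l)
          ≤ ENNReal.ofReal ((Atail * X) * ((2:ℝ)^(-α))^k) := by
        intro k
        have h2k1 : (1:ℝ) ≤ (2:ℝ)^k := one_le_pow₀ one_le_two
        have h2kB1 : 1 < (2:ℝ)^k * B := lt_of_lt_of_le hB1 (le_mul_of_one_le_left hBpos.le h2k1)
        have h2k1B : (0:ℝ) < (2:ℝ)^(k+1)*B := by positivity
        -- pointwise bound
        have hpt : ∀ l ∈ Ioc ((2:ℝ)^k*B) ((2:ℝ)^(k+1)*B),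
            F l ≤ (4*(c₂ * ((2:ℝ)^(k+1)*B)^(d-1))) * g l := by
          intro l hl
          obtain ⟨hl1', hl2'⟩ := hl
          have hl1 : 1 < l := lt_trans h2kB1 hl1'
          have hl0 : 0 < l := lt_trans one_pos hl1
          have hub : 0 ≤ l * t := by positivity
          have hphi : (1 - φ (l*t))^2 ≤ 4 := by
            have h1 : |1 - φ (l*t)| ≤ 2 := by
              have h2 := abs_sub (1:ℝ) (φ (l*t))
              have h3 := hφbdd (l*t) hub
              have h4 : |(1:ℝ)| = 1 := abs_one
              linarith
            calc (1 - φ (l*t))^2 = |1 - φ (l*t)|^2 := (sq_abs _).symm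
              _ ≤ 2^2 := pow_le_pow_left₀ (abs_nonneg _) h1 2
              _ = 4 := by norm_num
          have hwb : w l ≤ c₂ * ((2:ℝ)^(k+1)*B)^(d-1) := by
            have h1 := (hwhigh l hl1).2
            have hmono : l^(d-1) ≤ ((2:ℝ)^(k+1)*B)^(d-1) :=
              Real.rpow_le_rpow hl0.le hl2' (by linarith)
            calc w l ≤ c₂ * l^(d-1) := h1
              _ ≤ c₂ * ((2:ℝ)^(k+1)*B)^(d-1) := mul_le_mul_of_nonneg_left hmono hc₂.le
          have hwpos : 0 ≤ w l := by
            refine le_trans ?_ (hwhigh l hl1).1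
            have := Real.rpow_nonneg hl0.le (d-1)
            positivity
          have hgw : 0 ≤ g l := hgnonneg l
          calc F l = (1 - φ (l*t))^2 * (g l * w l) := rfl
            _ ≤ 4 * (g l * w l) := mul_le_mul_of_nonneg_right hphi (by positivity)
            _ ≤ 4 * (g l * (c₂ * ((2:ℝ)^(k+1)*B)^(d-1))) := by
                apply mul_le_mul_of_nonneg_left _ (by norm_num)
                exact mul_le_mul_of_nonneg_left hwb hgw
            _ = (4*(c₂ * ((2:ℝ)^(k+1)*B)^(d-1))) * g l := by ring
        -- tail integral of g
        have hspos : 0 < t/2^k := by positivity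
        have hslt : t/2^k < t₁ := by
          calc t/2^k ≤ t/1 := by
                apply div_le_div_of_nonneg_left ht.le one_pos h2k1
            _ = t := by ring
            _ < t₁ := htt₁
        have hinv : 1/(t/2^k) = (2:ℝ)^k*B := by
          rw [hBdef]; field_simp
        have hHk := H (t/2^k) hspos hslt
        rw [hinv] at hHk
        have hgtail : ∫⁻ l in Ioc ((2:ℝ)^k*B) ((2:ℝ)^(k+1)*B), ENNReal.ofReal (g l)
            ≤ ENNReal.ofReal (C₂ * (t/2^k) ^ (2*α + d - 1) * Real.log ((2:ℝ)^k*B) ^ (2*γ)) :=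
          le_trans (lintegral_mono_set Ioc_subset_Ioi_self) hHk
        have hA0 : (0:ℝ) ≤ 4*(c₂ * ((2:ℝ)^(k+1)*B)^(d-1)) := by
          have := Real.rpow_nonneg h2k1B.le (d-1)
          positivity
        refine (piece_bound measurableSet_Ioc hA0 hpt hgtail).trans (ENNReal.ofReal_le_ofReal ?_)
        -- real algebra
        have elog : Real.log ((2:ℝ)^k*B) = L + k * Real.log 2 := by
          rw [Real.log_mul (by positivity) (by positivity), Real.log_pow, hBdef, ← hLdef]
          ring
        have hupk := hup L hL1 k
        have hLk0 : (0:ℝ) ≤ (L + k * Real.log 2) := by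
          have : (0:ℝ) ≤ (k:ℝ) * Real.log 2 :=
            mul_nonneg (Nat.cast_nonneg k) (Real.log_pos one_lt_two).le
          linarith
        have hpow := tailpow t d α ht k
        rw [← hBdef] at hpow
        have hmix : ((2:ℝ)^(-(2*α)))^k * ((2:ℝ)^α)^k = ((2:ℝ)^(-α))^k := by
          rw [← mul_pow, ← Real.rpow_add two_pos, show -(2*α)+α = -α by ring]
        have ht2α : (0:ℝ) ≤ t^(2*α) := Real.rpow_nonneg ht.le _
        have hLγ : (0:ℝ) ≤ L^(2*γ) := Real.rpow_nonneg hLpos.le _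
        have hrtk : (0:ℝ) ≤ ((2:ℝ)^(-α))^k := by positivity
        have h2d1 : (0:ℝ) ≤ (2:ℝ)^(d-1) := Real.rpow_nonneg (by norm_num) _
        have h2negk : (0:ℝ) ≤ ((2:ℝ)^(-(2*α)))^k := by positivity
        calc 4*(c₂ * ((2:ℝ)^(k+1)*B)^(d-1)) * (C₂ * (t/2^k) ^ (2*α + d - 1) * Real.log ((2:ℝ)^k*B) ^ (2*γ))
            = 4*(c₂*C₂) * (((2:ℝ)^(k+1)*B)^(d-1) * (t/2^k) ^ (2*α + d - 1))
                * (L + k * Real.log 2) ^ (2*γ) := by rw [elog]; ring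
          _ = 4*(c₂*C₂) * ((2:ℝ)^(d-1) * ((2:ℝ)^(-(2*α)))^k * t^(2*α))
                * (L + k * Real.log 2) ^ (2*γ) := by rw [hpow]
          _ ≤ 4*(c₂*C₂) * ((2:ℝ)^(d-1) * ((2:ℝ)^(-(2*α)))^k * t^(2*α))
                * (Mu * ((2:ℝ)^α)^k * L^(2*γ)) := by
              apply mul_le_mul_of_nonneg_left hupk
              positivity
          _ = (Atail * X) * (((2:ℝ)^(-(2*α)))^k * ((2:ℝ)^α)^k) := by
              rw [hAtaildef, hXdef]; ring
          _ = (Atail * X) * ((2:ℝ)^(-α))^k := by rw [hmix]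
      calc ∫⁻ l in Ioi B, ENNReal.ofReal (F l)
          ≤ ∫⁻ l in ⋃ k : ℕ, Ioc ((2:ℝ)^k*B) ((2:ℝ)^(k+1)*B), ENNReal.ofReal (F l) :=
            lintegral_mono_set (dyadic_up B hBpos)
        _ ≤ ∑' k : ℕ, ∫⁻ l in Ioc ((2:ℝ)^k*B) ((2:ℝ)^(k+1)*B), ENNReal.ofReal (F l) :=
            lintegral_iUnion_le _ _
        _ ≤ ∑' k : ℕ, ENNReal.ofReal ((Atail * X) * ((2:ℝ)^(-α))^k) :=
            ENNReal.tsum_le_tsum hk_bound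
        _ ≤ ENNReal.ofReal ((Atail * X) * (1 - (2:ℝ)^(-α))⁻¹) :=
            tsum_geom_ofReal _ _ (by positivity) hrtpos.le hrt1
        _ = ENNReal.ofReal (Ktail * X) := by rw [hKtaildef]; ring_nf
    -- ====== MID piece ======
    set Amid : ℝ := Cφ^2*(c₂*C₂) * (2:ℝ)^(2*α+d-1) * Md with hAmiddef
    have hAmid0 : 0 ≤ Amid := by
      have := Real.rpow_nonneg (le_of_lt (two_pos (α := ℝ))) (2*α+d-1)
      positivity
    have hmidI : ∫⁻ l in Ioc Λ B, ENNReal.ofReal (F l)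
        ≤ ENNReal.ofReal (Kmid * X) := by
      have hk_bound : ∀ k : ℕ,
          ∫⁻ l in Ioc (B/2^(k+1)) (B/2^k) ∩ Ioi Λ, ENNReal.ofReal (F l)
          ≤ ENNReal.ofReal ((Amid * X) * ((2:ℝ)^(α-2))^k) := by
        intro k
        have h2k0 : (0:ℝ) < (2:ℝ)^k := by positivity
        have hXr : (0:ℝ) ≤ (Amid * X) * ((2:ℝ)^(α-2))^k := by positivity
        by_cases hc : Λ < B/2^k
        · -- nonempty case
          have hBk0 : 0 < B/2^k := lt_trans hΛpos hc
          have hBk10 : 0 < B/2^(k+1) := by positivity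
          have hmeas : MeasurableSet (Ioc (B/2^(k+1)) (B/2^k) ∩ Ioi Λ) :=
            measurableSet_Ioc.inter measurableSet_Ioi
          -- pointwise
          have hlt2k : (B/2^k) * t = 1/2^k := by rw [hBdef]; field_simp
          have hpt : ∀ l ∈ Ioc (B/2^(k+1)) (B/2^k) ∩ Ioi Λ,
              F l ≤ (Cφ^2 * ((1:ℝ)/2^k)^(4:ℕ) * (c₂ * ((B/2^k))^(d-1))) * g l := by
            intro l hl
            obtain ⟨⟨hll, hlu⟩, hlΛ'⟩ := hl
            have hl1 : 1 < l := lt_of_le_of_lt hΛ1 hlΛ'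
            have hl0 : 0 < l := lt_trans one_pos hl1
            have hub : 0 ≤ l * t := by positivity
            have hphi2 : (1 - φ (l*t))^2 ≤ Cφ^2 * (l*t)^(4:ℕ) := by
              have h2 : |1 - φ (l*t)|^2 ≤ (Cφ * (l*t)^2)^2 :=
                pow_le_pow_left₀ (abs_nonneg _) (hφnear (l*t) hub) 2
              calc (1 - φ (l*t))^2 = |1 - φ (l*t)|^2 := (sq_abs _).symm
                _ ≤ (Cφ * (l*t)^2)^2 := h2
                _ = Cφ^2 * (l*t)^(4:ℕ) := by ring
            have hlt4 : (l*t)^(4:ℕ) ≤ ((1:ℝ)/2^k)^(4:ℕ) := by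
              apply pow_le_pow_left₀ (by positivity)
              rw [← hlt2k]
              exact mul_le_mul_of_nonneg_right hlu ht.le
            have hwb : w l ≤ c₂ * (B/2^k)^(d-1) := by
              have h1 := (hwhigh l hl1).2
              have hmono : l^(d-1) ≤ (B/2^k)^(d-1) :=
                Real.rpow_le_rpow hl0.le hlu (by linarith)
              calc w l ≤ c₂ * l^(d-1) := h1
                _ ≤ c₂ * (B/2^k)^(d-1) := mul_le_mul_of_nonneg_left hmono hc₂.le
            have hwpos : 0 ≤ w l := by
              refine le_trans ?_ (hwhigh l hl1).1
              have := Real.rpow_nonneg hl0.le (d-1)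
              positivity
            have hgw : 0 ≤ g l := hgnonneg l
            calc F l = (1 - φ (l*t))^2 * (g l * w l) := rfl
              _ ≤ (Cφ^2 * (l*t)^(4:ℕ)) * (g l * w l) :=
                  mul_le_mul_of_nonneg_right hphi2 (by positivity)
              _ ≤ (Cφ^2 * ((1:ℝ)/2^k)^(4:ℕ)) * (g l * (c₂ * (B/2^k)^(d-1))) := by
                  apply mul_le_mul
                  · exact mul_le_mul_of_nonneg_left hlt4 (by positivity)
                  · exact mul_le_mul_of_nonneg_left hwb hgw
                  · positivity
                  · positivity
              _ = (Cφ^2 * ((1:ℝ)/2^k)^(4:ℕ) * (c₂ * ((B/2^k))^(d-1))) * g l := by ring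
          -- tail integral of g
          have hs'pos : 0 < (2:ℝ)^(k+1)*t := by positivity
          have hs'lt : (2:ℝ)^(k+1)*t < t₁ := by
            have h1 : Λ * (t * 2^k) < (B/2^k) * (t * 2^k) :=
              mul_lt_mul_of_pos_right hc (by positivity)
            have h2 : (B/2^k) * (t * 2^k) = 1 := by
              rw [hBdef]; field_simp
            have h3 : Λ * (t * 2^k) = (2/t₁) * (t * 2^k) := by rw [hΛdef]
            have h4 : (2/t₁) * (t * 2^k) < 1 := by rw [← h3]; rw [h2] at h1; exact h1
            have h5 : 2 * (t * 2^k) < t₁ := by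
              rw [div_mul_eq_mul_div, div_lt_one ht₁0] at h4
              linarith
            calc (2:ℝ)^(k+1)*t = 2 * (t * 2^k) := by ring
              _ < t₁ := h5
          have hinv : 1/((2:ℝ)^(k+1)*t) = B/2^(k+1) := by
            rw [hBdef]; field_simp
          have hHk := H ((2:ℝ)^(k+1)*t) hs'pos hs'lt
          rw [hinv] at hHk
          have hgtail : ∫⁻ l in Ioc (B/2^(k+1)) (B/2^k) ∩ Ioi Λ, ENNReal.ofReal (g l)
              ≤ ENNReal.ofReal (C₂ * ((2:ℝ)^(k+1)*t) ^ (2*α + d - 1) * Real.log (B/2^(k+1)) ^ (2*γ)) := by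
            refine le_trans (lintegral_mono_set ?_) hHk
            exact fun x hx => hx.1.1
          have hA0 : (0:ℝ) ≤ Cφ^2 * ((1:ℝ)/2^k)^(4:ℕ) * (c₂ * ((B/2^k))^(d-1)) := by
            have := Real.rpow_nonneg hBk0.le (d-1)
            positivity
          refine (piece_bound hmeas hA0 hpt hgtail).trans (ENNReal.ofReal_le_ofReal ?_)
          -- real algebra
          have elog : Real.log (B/2^(k+1)) = L - ((k:ℝ)+1) * Real.log 2 := by
            rw [Real.log_div (ne_of_gt hBpos) (by positivity), Real.log_pow, hBdef, ← hLdef]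
            push_cast
            ring
          have hℓcond : ℓ₁ ≤ L - ((k:ℝ)+1) * Real.log 2 := by
            have h1 : (1:ℝ)/t₁ ≤ B/2^(k+1) := by
              have e1 : B/2^(k+1) = (B/2^k)/2 := by rw [pow_succ]; ring
              have e2 : Λ/2 = 1/t₁ := by rw [hΛdef]; field_simp
              rw [e1, ← e2]
              linarith
            have h2 : Real.log (1/t₁) ≤ Real.log (B/2^(k+1)) :=
              Real.log_le_log (by positivity) h1
            rw [elog] at h2
            exact h2
          have hdk := hdown t ht httd k hℓcond
          rw [← hLdef] at hdk
          have hpowm := midpow t d α ht k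
          rw [← hBdef] at hpowm
          have h2pow : (0:ℝ) ≤ (2:ℝ)^(2*α+d-1) := Real.rpow_nonneg (by norm_num) _
          have ht2α : (0:ℝ) ≤ t^(2*α) := Real.rpow_nonneg ht.le _
          calc Cφ^2 * ((1:ℝ)/2^k)^(4:ℕ) * (c₂ * ((B/2^k))^(d-1))
                * (C₂ * ((2:ℝ)^(k+1)*t) ^ (2*α + d - 1) * Real.log (B/2^(k+1)) ^ (2*γ))
              = Cφ^2*(c₂*C₂)
                  * (((1:ℝ)/2^k)^(4:ℕ) * ((B/2^k))^(d-1) * ((2:ℝ)^(k+1)*t) ^ (2*α+d-1))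
                  * (L - ((k:ℝ)+1) * Real.log 2) ^ (2*γ) := by rw [elog]; ring
            _ = Cφ^2*(c₂*C₂) * ((2:ℝ)^(2*α+d-1) * ((2:ℝ)^(2*α-4))^k * t^(2*α))
                  * (L - ((k:ℝ)+1) * Real.log 2) ^ (2*γ) := by rw [hpowm]
            _ = (Cφ^2*(c₂*C₂) * (2:ℝ)^(2*α+d-1) * t^(2*α))
                  * (((2:ℝ)^(2*α-4))^k * (L - ((k:ℝ)+1) * Real.log 2) ^ (2*γ)) := by ring
            _ ≤ (Cφ^2*(c₂*C₂) * (2:ℝ)^(2*α+d-1) * t^(2*α))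
                  * (Md * ((2:ℝ)^(α-2))^k * L^(2*γ)) := by
                apply mul_le_mul_of_nonneg_left hdk
                positivity
            _ = (Amid * X) * ((2:ℝ)^(α-2))^k := by rw [hAmiddef, hXdef]; ring
        · -- empty case
          have hempty : Ioc (B/2^(k+1)) (B/2^k) ∩ Ioi Λ = ∅ := by
            ext x
            simp only [mem_inter_iff, mem_Ioc, mem_Ioi, mem_empty_iff_false, iff_false, not_and,
              and_imp]
            intro h1 h2 h3
            push_neg at hc
            linarith
          rw [hempty]
          simp only [Measure.restrict_empty, lintegral_zero_measure]
          exact zero_le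
      calc ∫⁻ l in Ioc Λ B, ENNReal.ofReal (F l)
          ≤ ∫⁻ l in ⋃ k : ℕ, (Ioc (B/2^(k+1)) (B/2^k) ∩ Ioi Λ), ENNReal.ofReal (F l) := by
            apply lintegral_mono_set
            intro x hx
            have hx0B : x ∈ Ioc (0:ℝ) B := ⟨lt_trans hΛpos hx.1, hx.2⟩
            obtain ⟨k, hk⟩ := mem_iUnion.mp (dyadic_down B hBpos hx0B)
            exact mem_iUnion.mpr ⟨k, hk, hx.1⟩
        _ ≤ ∑' k : ℕ, ∫⁻ l in Ioc (B/2^(k+1)) (B/2^k) ∩ Ioi Λ, ENNReal.ofReal (F l) :=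
            lintegral_iUnion_le _ _
        _ ≤ ∑' k : ℕ, ENNReal.ofReal ((Amid * X) * ((2:ℝ)^(α-2))^k) :=
            ENNReal.tsum_le_tsum hk_bound
        _ ≤ ENNReal.ofReal ((Amid * X) * (1 - (2:ℝ)^(α-2))⁻¹) :=
            tsum_geom_ofReal _ _ (by positivity) hrmpos.le hrm1
        _ = ENNReal.ofReal (Kmid * X) := by rw [hKmiddef]; ring_nf
    -- ====== assembly ======
    have hsub : Ioi (0:ℝ) ⊆ (Ioc 0 Λ ∪ Ioc Λ B) ∪ Ioi B := by
      intro x hx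
      rcases le_or_gt x Λ with h1 | h1
      · exact Or.inl (Or.inl ⟨hx, h1⟩)
      · rcases le_or_gt x B with h2 | h2
        · exact Or.inl (Or.inr ⟨h1, h2⟩)
        · exact Or.inr h2
    have hXfin : (Klow + Kmid + Ktail) * X ≤ Ksum * X := by
      apply mul_le_mul_of_nonneg_right _ hXpos.le
      rw [hKsumdef]; linarith
    have hfinal : (Real.sqrt Ksum * (t ^ α * L ^ γ)) ^ 2 = Ksum * X := by
      have e0 : Real.sqrt Ksum ^ 2 = Ksum := Real.sq_sqrt hKsumpos.le
      have e1 : (t^α)^2 = t^(2*α) := by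
        rw [← Real.rpow_natCast (t^α) 2, ← Real.rpow_mul ht.le]
        norm_num
        rw [mul_comm]
      have e2 : (L^γ)^2 = L^(2*γ) := by
        rw [← Real.rpow_natCast (L^γ) 2, ← Real.rpow_mul hLpos.le]
        norm_num
        rw [mul_comm]
      calc (Real.sqrt Ksum * (t ^ α * L ^ γ)) ^ 2
          = Real.sqrt Ksum ^ 2 * ((t^α)^2 * (L^γ)^2) := by ring
        _ = Ksum * X := by rw [e0, e1, e2, hXdef]
    calc ∫⁻ l in Ioi (0:ℝ), ENNReal.ofReal (F l)
        ≤ ∫⁻ l in (Ioc 0 Λ ∪ Ioc Λ B) ∪ Ioi B, ENNReal.ofReal (F l) :=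
          lintegral_mono_set hsub
      _ ≤ (∫⁻ l in Ioc 0 Λ ∪ Ioc Λ B, ENNReal.ofReal (F l))
            + ∫⁻ l in Ioi B, ENNReal.ofReal (F l) := lintegral_union_le _ _ _
      _ ≤ ((∫⁻ l in Ioc 0 Λ, ENNReal.ofReal (F l))
            + ∫⁻ l in Ioc Λ B, ENNReal.ofReal (F l))
            + ∫⁻ l in Ioi B, ENNReal.ofReal (F l) :=
          add_le_add_left (lintegral_union_le _ _ _) _
      _ ≤ (ENNReal.ofReal (Klow * X) + ENNReal.ofReal (Kmid * X))
            + ENNReal.ofReal (Ktail * X) :=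
          add_le_add (add_le_add hlow hmidI) htailI
      _ = ENNReal.ofReal ((Klow + Kmid + Ktail) * X) := by
          rw [← ENNReal.ofReal_add (by positivity) (by positivity),
              ← ENNReal.ofReal_add (by positivity) (by positivity)]
          ring_nf
      _ ≤ ENNReal.ofReal (Ksum * X) := ENNReal.ofReal_le_ofReal hXfin
      _ = ENNReal.ofReal ((Real.sqrt Ksum * (t ^ α * L ^ γ)) ^ 2) := by rw [hfinal]
end
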